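/- arXiv:1606.07288 — 7 statements merged into one kernel-verified Lean document; each statement's English description precedes it below -/
import Mathlib

section
/- Let S = (P, L, I) be a generalized 2d-gon, let j with 2 ≤ j ≤ d be even, and let O be a set of points. Then O is a distance-j ovoid of S if and only if for every line ℓ there is exactly one point x ∈ O with d(x, ℓ) ≤ (j − 2)/2. -/
open SimpleGraph
section Geometry

variable {P L : Type*}

/-- The adjacency relation of the incidence graph of a point-line geometry. -/
def IncAdj (I : P → L → Prop) : P ⊕ L → P ⊕ L → Prop
  | Sum.inl p, Sum.inr l => I p l
  | Sum.inr l, Sum.inl p => I p l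
  | _, _ => False

/-- The incidence graph of a point-line geometry: vertices are points and lines,
a point is adjacent to a line iff they are incident. -/
def incidenceGraph (I : P → L → Prop) : SimpleGraph (P ⊕ L) where
  Adj := IncAdj I
  symm := ⟨by intro a b h; cases a <;> cases b <;> simp_all [IncAdj]⟩
  loopless := ⟨by intro a h; cases a <;> simp_all [IncAdj]⟩

/-- The point graph of a point-line geometry: distinct points are adjacent iff they
are incident with a common line. -/
def pointGraph (I : P → L → Prop) : SimpleGraph P where
  Adj x y := x ≠ y ∧ ∃ l, I x l ∧ I y l
  symm := ⟨by rintro x y ⟨h, l, hx, hy⟩; exact ⟨h.symm, l, hy, hx⟩⟩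
  loopless := ⟨by rintro x ⟨h, -⟩; exact h rfl⟩

/-- Distance from a point to a line: the minimum point-graph distance from `x`
to a point incident with `l`. -/
noncomputable def distPL (I : P → L → Prop) (x : P) (l : L) : ℕ :=
  sInf ((pointGraph I).dist x '' {y | I y l})

/-- Distance between two lines: the minimum point-graph distance between a point of `l`
and a point of `l'`. -/
noncomputable def distLL (I : P → L → Prop) (l l' : L) : ℕ :=
  sInf {n | ∃ x y, I x l ∧ I y l' ∧ (pointGraph I).dist x y = n}

/-- A generalized `n`-gon of order `(s, t)`: every line has `s + 1` points, every point is
on `t + 1` lines, and the incidence graph has diameter `n` and girth `2 * n`. -/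
structure IsGenPolygon (I : P → L → Prop) (n s t : ℕ) : Prop where
  pts_nonempty : Nonempty P
  line_card : ∀ l : L, {p : P | I p l}.ncard = s + 1
  point_card : ∀ p : P, {l : L | I p l}.ncard = t + 1
  ediam_eq : (incidenceGraph I).ediam = n
  egirth_eq : (incidenceGraph I).egirth = 2 * n

/-- A subhexagon of order `(s, t')` of a generalized hexagon. -/
def IsSubhexagon (I : P → L → Prop) (s t' : ℕ) (P' : Set P) (L' : Set L) : Prop :=
  (∀ p : P, ∀ l ∈ L', I p l → p ∈ P') ∧
  IsGenPolygon (fun (p : P') (l : L') => I p.1 l.1) 6 s t'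

/-- A distance-`j` ovoid of a generalized `2d`-gon (in terms of the point graph). -/
def IsDistanceOvoid (I : P → L → Prop) (j : ℕ) (O : Set P) : Prop :=
  (∀ x ∈ O, ∀ y ∈ O, x ≠ y → j ≤ (pointGraph I).dist x y) ∧
  (∀ a : P, ∃ x ∈ O, 2 * (pointGraph I).dist a x ≤ j) ∧
  (∀ l : L, ∃ x ∈ O, 2 * distPL I x l ≤ j - 1)

end Geometry


section AuxLemmas

open SimpleGraph

variable {P L : Type*}

private lemma exists_walk_getVert_left {V : Type*} {G : SimpleGraph V} {u v : V}
    (w : G.Walk u v) (i : ℕ) : ∃ w' : G.Walk u (w.getVert i), w'.length ≤ i := by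
  induction w generalizing i with
  | nil => exact ⟨SimpleGraph.Walk.nil, by simp⟩
  | cons h q ih =>
    cases i with
    | zero => rw [SimpleGraph.Walk.getVert_zero]; exact ⟨SimpleGraph.Walk.nil, by simp⟩
    | succ i =>
      rw [SimpleGraph.Walk.getVert_cons_succ]
      obtain ⟨w', hw'⟩ := ih i
      exact ⟨SimpleGraph.Walk.cons h w', by simp [SimpleGraph.Walk.length_cons]; omega⟩

private lemma exists_walk_getVert_right {V : Type*} {G : SimpleGraph V} {u v : V}
    (w : G.Walk u v) (i : ℕ) : ∃ w' : G.Walk (w.getVert i) v, w'.length ≤ w.length - i := by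
  induction w generalizing i with
  | nil => exact ⟨SimpleGraph.Walk.nil, by simp⟩
  | cons h q ih =>
    cases i with
    | zero => rw [SimpleGraph.Walk.getVert_zero]; exact ⟨SimpleGraph.Walk.cons h q, by simp⟩
    | succ i =>
      rw [SimpleGraph.Walk.getVert_cons_succ]
      obtain ⟨w', hw'⟩ := ih i
      refine ⟨w', ?_⟩
      simp only [SimpleGraph.Walk.length_cons]
      omega

private lemma reach_of_incWalk {I : P → L → Prop} (n : ℕ) :
    ∀ {x y : P} (w : (incidenceGraph I).Walk (Sum.inl x) (Sum.inl y)),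
      w.length ≤ n → (pointGraph I).Reachable x y := by
  induction n with
  | zero =>
    intro x y w hw
    cases w with
    | nil => exact SimpleGraph.Reachable.refl x
    | cons h q => simp [SimpleGraph.Walk.length_cons] at hw
  | succ n ih =>
    intro x y w hw
    cases w with
    | nil => exact SimpleGraph.Reachable.refl x
    | @cons _ b _ h q =>
      cases b with
      | inl p => exact absurd h (by simp [incidenceGraph, IncAdj])
      | inr l =>
        cases q with
        | @cons _ c _ h2 q2 =>
          cases c with
          | inr l' => exact absurd h2 (by simp [incidenceGraph, IncAdj])
          | inl p =>
            have hxl : I x l := h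
            have hpl : I p l := h2
            have hrest : (pointGraph I).Reachable p y := by
              apply ih q2
              simp only [SimpleGraph.Walk.length_cons] at hw
              omega
            by_cases hxp : x = p
            · rw [hxp]; exact hrest
            · exact (SimpleGraph.Adj.reachable
                (show (pointGraph I).Adj x p from ⟨hxp, l, hxl, hpl⟩)).trans hrest

private lemma pointGraph_connected {I : P → L → Prop} {n s t : ℕ}
    (hpoly : IsGenPolygon I n s t) (hn : (n : ℕ∞) ≠ ⊤) :
    (pointGraph I).Connected := by
  have hne : Nonempty P := hpoly.pts_nonempty
  refine ⟨fun x y => ?_⟩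
  have hre : (incidenceGraph I).Reachable (Sum.inl x) (Sum.inl y) := by
    apply SimpleGraph.reachable_of_edist_ne_top
    intro htop
    have hle := SimpleGraph.edist_le_ediam
      (G := incidenceGraph I) (u := Sum.inl x) (v := Sum.inl y)
    rw [hpoly.ediam_eq, htop] at hle
    exact hn (top_le_iff.mp hle)
  obtain ⟨w⟩ := hre
  exact reach_of_incWalk w.length w le_rfl

end AuxLemmas

/-- For even `j`, a set `O` of points of a generalized `2d`-gon is a distance-`j` ovoid
iff every line is at point-graph distance at most `(j-2)/2` from exactly one point of `O`. -/
theorem distance_ovoid_iff_exact_cover_even {P L : Type*} {I : P → L → Prop}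
    {d j s t : ℕ} (hs : 1 ≤ s) (ht : 1 ≤ t) (hpoly : IsGenPolygon I (2 * d) s t)
    (hj2 : 2 ≤ j) (hjd : j ≤ d) (hje : Even j) (O : Set P) :
    IsDistanceOvoid I j O ↔
      ∀ l : L, ∃! x : P, x ∈ O ∧ distPL I x l ≤ (j - 2) / 2 := by
  obtain ⟨r, hr⟩ := hje
  have hjk : j = 2 * ((j - 2) / 2) + 2 := by omega
  set k := (j - 2) / 2 with hk
  -- basic facts about the geometry
  have hline : ∀ l : L, {p : P | I p l}.Nonempty := fun l =>
    Set.nonempty_of_ncard_ne_zero (by rw [hpoly.line_card]; omega)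
  have hpt : ∀ p : P, {l : L | I p l}.Nonempty := fun p =>
    Set.nonempty_of_ncard_ne_zero (by rw [hpoly.point_card]; omega)
  have hconn : (pointGraph I).Connected :=
    pointGraph_connected hpoly (ENat.coe_ne_top _)
  have hdPL_le : ∀ (x p : P) (l : L), I p l →
      distPL I x l ≤ (pointGraph I).dist x p := fun x p l h =>
    Nat.sInf_le ⟨p, h, rfl⟩
  have hdPL_ex : ∀ (x : P) (l : L), ∃ p, I p l ∧
      (pointGraph I).dist x p = distPL I x l := by
    intro x l
    have := Nat.sInf_mem (((hline l).image ((pointGraph I).dist x)))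
    obtain ⟨p, hp, hp2⟩ := this
    exact ⟨p, hp, hp2⟩
  have hadj_dist : ∀ p q : P, (pointGraph I).Adj p q → (pointGraph I).dist p q ≤ 1 := by
    intro p q h
    simpa using SimpleGraph.dist_le (SimpleGraph.Walk.cons h SimpleGraph.Walk.nil)
  constructor
  · rintro ⟨h1, h2, h3⟩ l
    obtain ⟨x, hxO, hxl⟩ := h3 l
    refine ⟨x, ⟨hxO, by omega⟩, ?_⟩
    rintro y ⟨hyO, hyl⟩
    by_contra hne
    obtain ⟨p, hpl, hp⟩ := hdPL_ex x l
    obtain ⟨q, hql, hq⟩ := hdPL_ex y l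
    have hpq : (pointGraph I).dist q p ≤ 1 := by
      by_cases hpq' : q = p
      · simp [hpq', SimpleGraph.dist_self]
      · exact hadj_dist q p ⟨hpq', l, hql, hpl⟩
    have hyx : j ≤ (pointGraph I).dist y x := h1 y hyO x hxO hne
    have tri1 : (pointGraph I).dist y x ≤
        (pointGraph I).dist y q + (pointGraph I).dist q x := hconn.dist_triangle
    have tri2 : (pointGraph I).dist q x ≤
        (pointGraph I).dist q p + (pointGraph I).dist p x := hconn.dist_triangle
    have hcx : (pointGraph I).dist p x = (pointGraph I).dist x p :=
      SimpleGraph.dist_comm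
    omega
  · intro h
    refine ⟨?_, ?_, ?_⟩
    · intro x hx y hy hne
      by_contra hlt
      push_neg at hlt
      have hre : (pointGraph I).Reachable x y := hconn x y
      have hm1 : 1 ≤ (pointGraph I).dist x y := hre.pos_dist_of_ne hne
      obtain ⟨w, hw⟩ := hre.exists_walk_length_eq_dist
      set m := (pointGraph I).dist x y with hmm
      set a := (m - 1) / 2 with ha
      have haw : a < w.length := by omega
      have hadj : (pointGraph I).Adj (w.getVert a) (w.getVert (a + 1)) :=
        w.adj_getVert_succ haw
      obtain ⟨hne', l, h1l, h2l⟩ := hadj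
      obtain ⟨w1, hw1⟩ := exists_walk_getVert_left w a
      obtain ⟨w2, hw2⟩ := exists_walk_getVert_right w (a + 1)
      have d1 : (pointGraph I).dist x (w.getVert a) ≤ a :=
        le_trans (SimpleGraph.dist_le w1) hw1
      have d2 : (pointGraph I).dist (w.getVert (a + 1)) y ≤ m - (a + 1) :=
        le_trans (SimpleGraph.dist_le w2) (by omega)
      have hx' : distPL I x l ≤ k :=
        le_trans (le_trans (hdPL_le x _ l h1l) d1) (by omega)
      have hy' : distPL I y l ≤ k := by
        have := hdPL_le y _ l h2l
        have hcomm : (pointGraph I).dist y (w.getVert (a + 1)) =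
            (pointGraph I).dist (w.getVert (a + 1)) y := SimpleGraph.dist_comm
        omega
      obtain ⟨z, -, hz⟩ := h l
      have e1 := hz x ⟨hx, hx'⟩
      have e2 := hz y ⟨hy, hy'⟩
      exact hne (e1.trans e2.symm)
    · intro a
      obtain ⟨l, hl⟩ := hpt a
      obtain ⟨x, ⟨hxO, hxl⟩, -⟩ := h l
      obtain ⟨p, hpl, hp⟩ := hdPL_ex x l
      refine ⟨x, hxO, ?_⟩
      have hap : (pointGraph I).dist a p ≤ 1 := by
        by_cases hap' : a = p
        · simp [hap', SimpleGraph.dist_self]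
        · exact hadj_dist a p ⟨hap', l, hl, hpl⟩
      have tri : (pointGraph I).dist a x ≤
          (pointGraph I).dist a p + (pointGraph I).dist p x := hconn.dist_triangle
      have hcx : (pointGraph I).dist p x = (pointGraph I).dist x p :=
        SimpleGraph.dist_comm
      omega
    · intro l
      obtain ⟨x, ⟨hxO, hxl⟩, -⟩ := h l
      exact ⟨x, hxO, by omega⟩
end

section
/- Let S = (P, L, I) be a generalized 2d-gon, let j with 2 ≤ j ≤ d be odd, and let O be a set of points. Then O is a distance-j ovoid of S if and only if for every point p there is exactly one point x ∈ O with d(x, p) ≤ (j − 1)/2. -/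
open SimpleGraph
section AuxProof
variable {P L : Type*}

lemma aux_reach {I : P → L → Prop} :
    ∀ (n : ℕ) (u v : P ⊕ L) (w : (incidenceGraph I).Walk u v), w.length ≤ n →
      ∀ a b : P, u = Sum.inl a → v = Sum.inl b → (pointGraph I).Reachable a b := by
  intro n
  induction n with
  | zero =>
    intro u v w hw a b hu hv
    cases w with
    | nil =>
      subst hu; injection hv with h; subst h; exact Reachable.refl a
    | cons h w' => simp at hw
  | succ n ih =>
    intro u v w hw a b hu hv
    cases w with
    | nil =>
      subst hu; injection hv with h; subst h; exact Reachable.refl a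
    | cons h w' =>
      subst hu
      rename_i x
      cases x with
      | inl p => simp [incidenceGraph, IncAdj] at h
      | inr l =>
        cases w' with
        | nil => exact absurd hv (by simp)
        | cons h2 w'' =>
          rename_i y
          cases y with
          | inr l' => simp [incidenceGraph, IncAdj] at h2
          | inl c =>
            have hlen : w''.length ≤ n := by
              simp [SimpleGraph.Walk.length_cons] at hw; omega
            have rcb : (pointGraph I).Reachable c b := ih _ _ w'' hlen c b rfl hv
            have hal : I a l := h
            have hcl : I c l := h2
            by_cases hac : a = c
            · subst hac; exact rcb
            · exact (SimpleGraph.Adj.reachable (G := pointGraph I) ⟨hac, l, hal, hcl⟩).trans rcb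

lemma aux_mid {V : Type*} {G : SimpleGraph V} (hc : G.Connected) {x y : V} (w : G.Walk x y) :
    ∀ i ≤ w.length, ∃ p : V, G.dist x p ≤ i ∧ G.dist p y ≤ w.length - i := by
  induction w with
  | @nil u =>
    intro i _
    exact ⟨u, by simp [SimpleGraph.dist_self], by simp [SimpleGraph.dist_self]⟩
  | @cons u v z h w' ih =>
    intro i hi
    match i with
    | 0 => exact ⟨u, by simp [SimpleGraph.dist_self], by simpa using SimpleGraph.dist_le (SimpleGraph.Walk.cons h w')⟩
    | (i+1) =>
      obtain ⟨p, hp1, hp2⟩ := ih i (by simpa using hi)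
      refine ⟨p, ?_, by simpa using hp2⟩
      have t1 : G.dist u p ≤ G.dist u v + G.dist v p := hc.dist_triangle
      have t2 : G.dist u v ≤ 1 := by simpa using SimpleGraph.dist_le h.toWalk
      omega

end AuxProof

/-- For odd `j`, a set `O` of points of a generalized `2d`-gon is a distance-`j` ovoid
iff every point is at point-graph distance at most `(j-1)/2` from exactly one point of `O`. -/
theorem distance_ovoid_iff_exact_cover_odd {P L : Type*} {I : P → L → Prop}
    {d j s t : ℕ} (hs : 1 ≤ s) (ht : 1 ≤ t) (hpoly : IsGenPolygon I (2 * d) s t)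
    (hj2 : 2 ≤ j) (hjd : j ≤ d) (hjo : Odd j) (O : Set P) :
    IsDistanceOvoid I j O ↔
      ∀ p : P, ∃! x : P, x ∈ O ∧ (pointGraph I).dist x p ≤ (j - 1) / 2 := by
  obtain ⟨m, hm⟩ := hjo
  have hk : (j - 1) / 2 = m := by omega
  rw [hk]
  have hne : Nonempty P := hpoly.pts_nonempty
  have hreach : ∀ u v : P ⊕ L, (incidenceGraph I).Reachable u v := by
    intro u v
    apply SimpleGraph.reachable_of_edist_ne_top
    intro h
    have h1 : (incidenceGraph I).edist u v ≤ (incidenceGraph I).ediam :=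
      SimpleGraph.edist_le_ediam
    rw [h, hpoly.ediam_eq] at h1
    exact (ENat.coe_lt_top (2 * d)).not_ge h1
  have hconn : (pointGraph I).Connected := by
    refine ⟨fun a b => ?_⟩
    obtain ⟨w⟩ := hreach (Sum.inl a) (Sum.inl b)
    exact aux_reach w.length _ _ w le_rfl a b rfl rfl
  constructor
  · rintro ⟨h1, h2, h3⟩ p
    obtain ⟨x, hxO, hx⟩ := h2 p
    refine ⟨x, ⟨hxO, ?_⟩, ?_⟩
    · rw [SimpleGraph.dist_comm]; omega
    · rintro y ⟨hyO, hy⟩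
      by_contra hne'
      have hxy := h1 y hyO x hxO hne'
      have t : (pointGraph I).dist y x ≤
          (pointGraph I).dist y p + (pointGraph I).dist p x := hconn.dist_triangle
      omega
  · intro hcov
    refine ⟨?_, ?_, ?_⟩
    · intro x hx y hy hne'
      by_contra hlt
      push_neg at hlt
      have hr : (pointGraph I).Reachable x y := hconn.preconnected x y
      obtain ⟨w, hw⟩ := hr.exists_walk_length_eq_dist
      obtain ⟨p, hp1, hp2⟩ := aux_mid hconn w (min m w.length) (min_le_right _ _)
      obtain ⟨z, hz, huniq⟩ := hcov p
      have hx' : x = z := huniq x ⟨hx, by omega⟩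
      have hy' : y = z := huniq y ⟨hy, by rw [SimpleGraph.dist_comm]; omega⟩
      exact hne' (hx'.trans hy'.symm)
    · intro a
      obtain ⟨x, ⟨hxO, hxd⟩, -⟩ := hcov a
      refine ⟨x, hxO, ?_⟩
      rw [SimpleGraph.dist_comm]
      omega
    · intro l
      have hcard : {p : P | I p l}.ncard ≠ 0 := by rw [hpoly.line_card l]; omega
      obtain ⟨y, hy⟩ := Set.nonempty_of_ncard_ne_zero hcard
      obtain ⟨x, ⟨hxO, hxd⟩, -⟩ := hcov y
      refine ⟨x, hxO, ?_⟩
      have hle : distPL I x l ≤ (pointGraph I).dist x y :=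
        Nat.sInf_le ⟨y, hy, rfl⟩
      omega
end

section
/- A finite generalized hexagon of order (s,t), with s, t ≥ 1, has exactly (1 + s)(1 + st + s²t²) points. -/
open SimpleGraph
namespace GenHexAux

variable {V : Type*} {G : SimpleGraph V}

lemma exists_cycle_of_two_paths [DecidableEq V] :
    ∀ (n : ℕ) {a b : V} (q1 q2 : G.Walk a b), 2 * q1.length + q2.length ≤ n →
    q1.IsPath → q2.IsPath → q1 ≠ q2 →
    ∃ (v : V) (c : G.Walk v v), c.IsCycle ∧ c.length ≤ q1.length + q2.length := by
  intro n
  induction n with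
  | zero =>
    intro a b q1 q2 hlen h1 h2 hne
    cases q1 with
    | nil =>
      cases q2 with
      | nil => exact absurd rfl hne
      | cons h r => simp [SimpleGraph.Walk.length_cons] at hlen
    | cons h r => simp [SimpleGraph.Walk.length_cons] at hlen
  | succ n ih =>
    intro a b q1 q2 hlen hp1 hp2 hne
    cases q1 with
    | nil =>
      rw [(SimpleGraph.Walk.isPath_iff_eq_nil).mp hp2] at hne
      exact absurd rfl hne
    | @cons _ x _ h1 r1 =>
      cases q2 with
      | nil =>
        rw [(SimpleGraph.Walk.isPath_iff_eq_nil).mp hp1] at hne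
        exact absurd rfl hne
      | @cons _ y _ h2 r2 =>
        have hr1 : r1.IsPath := hp1.of_cons
        have hr2 : r2.IsPath := hp2.of_cons
        have ha1 : a ∉ r1.support := by
          have := hp1.support_nodup
          simp [Walk.support_cons] at this
          exact this.1
        have ha2 : a ∉ r2.support := by
          have := hp2.support_nodup
          simp [Walk.support_cons] at this
          exact this.1
        by_cases hxy : x = y
        · subst hxy
          by_cases hr : r1 = r2
          · subst hr
            exact absurd rfl hne
          · obtain ⟨v, c, hc, hlc⟩ := ih r1 r2 (by simp [Walk.length_cons] at hlen; omega) hr1 hr2 hr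
            exact ⟨v, c, hc, by simp [Walk.length_cons]; omega⟩
        · by_cases hx2 : x ∈ r2.support
          · set s2 := r2.dropUntil x hx2 with hs2def
            by_cases hr : r1 = s2
            · -- build cycle directly
              set t2 := r2.takeUntil x hx2 with ht2def
              have ht2p : t2.IsPath := hr2.takeUntil hx2
              have hat2 : a ∉ t2.support := fun hmem =>
                ha2 (r2.support_takeUntil_subset hx2 hmem)
              have hct : (Walk.cons h2 t2).IsPath := ht2p.cons hat2
              refine ⟨a, Walk.cons h1 (Walk.cons h2 t2).reverse, ?_, ?_⟩
              · rw [SimpleGraph.Walk.cons_isCycle_iff]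
                constructor
                · exact hct.reverse
                · rw [Walk.edges_reverse, List.mem_reverse]
                  simp only [Walk.edges_cons, List.mem_cons]
                  rintro (hedge | hedge)
                  · rw [Sym2.eq_iff] at hedge
                    rcases hedge with ⟨-, h'⟩ | ⟨-, h'⟩
                    · exact hxy h'
                    · exact h1.ne' h'
                  · exact hat2 (t2.fst_mem_support_of_mem_edges hedge)
              · have : t2.length ≤ r2.length := r2.length_takeUntil_le hx2
                simp only [Walk.length_cons, Walk.length_reverse]
                omega
            · have hs2p : s2.IsPath := hr2.dropUntil hx2
              have hs2len : s2.length ≤ r2.length := r2.length_dropUntil_le hx2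
              obtain ⟨v, c, hc, hlc⟩ := ih r1 s2
                (by simp only [Walk.length_cons] at hlen; omega) hr1 hs2p hr
              exact ⟨v, c, hc, by simp only [Walk.length_cons]; omega⟩
          · -- x ∉ r2.support
            have hxa : x ≠ a := h1.ne'
            have hxq2 : x ∉ (Walk.cons h2 r2).support := by
              simp [Walk.support_cons, hxa, hx2]
            have hq2' : (Walk.cons h1.symm (Walk.cons h2 r2)).IsPath := hp2.cons hxq2
            have hne' : r1 ≠ Walk.cons h1.symm (Walk.cons h2 r2) := by
              intro heq
              apply ha1
              rw [heq]
              simp [Walk.support_cons]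
            obtain ⟨v, c, hc, hlc⟩ := ih r1 (Walk.cons h1.symm (Walk.cons h2 r2))
              (by simp only [Walk.length_cons] at hlen ⊢; omega) hr1 hq2' hne'
            exact ⟨v, c, hc, by simp only [Walk.length_cons] at hlc ⊢; omega⟩

lemma dist_le_of_mem_support {p u w : V} (W : G.Walk p u) (hw : w ∈ W.support) :
    G.dist p w ≤ W.length := by
  classical
  calc G.dist p w ≤ (W.takeUntil w hw).length := SimpleGraph.dist_le _
  _ ≤ W.length := W.length_takeUntil_le hw

lemma pred_unique {g : ℕ}
    (hg : ∀ (v : V) (c : G.Walk v v), c.IsCycle → (g : ℕ∞) ≤ c.length)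
    {p v u1 u2 : V} (h1 : G.Adj u1 v) (h2 : G.Adj u2 v)
    (hr1 : G.Reachable p u1) (hr2 : G.Reachable p u2)
    (e1 : G.dist p u1 + 1 = G.dist p v) (e2 : G.dist p u2 + 1 = G.dist p v)
    (hk : 2 * G.dist p v < g) : u1 = u2 := by
  classical
  by_contra hne
  obtain ⟨g1, hg1p, hg1l⟩ := hr1.exists_path_of_dist
  obtain ⟨g2, hg2p, hg2l⟩ := hr2.exists_path_of_dist
  have hv1 : v ∉ g1.support := fun hmem => by
    have := dist_le_of_mem_support g1 hmem; omega
  have hv2 : v ∉ g2.support := fun hmem => by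
    have := dist_le_of_mem_support g2 hmem; omega
  set q1 := g1.concat h1 with hq1def
  set q2 := g2.concat h2 with hq2def
  have hq1p : q1.IsPath := by
    rw [← Walk.isPath_reverse_iff, hq1def, Walk.reverse_concat]
    exact (hg1p.reverse).cons (by simpa using hv1)
  have hq2p : q2.IsPath := by
    rw [← Walk.isPath_reverse_iff, hq2def, Walk.reverse_concat]
    exact (hg2p.reverse).cons (by simpa using hv2)
  have hqne : q1 ≠ q2 := by
    intro heq
    have hmem : s(u2, v) ∈ q2.edges := by
      rw [hq2def, Walk.edges_concat]
      simp
    rw [← heq, hq1def, Walk.edges_concat] at hmem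
    rw [List.concat_eq_append, List.mem_append] at hmem
    rcases hmem with hmem | hmem
    · exact hv1 (g1.snd_mem_support_of_mem_edges hmem)
    · simp only [List.mem_singleton, Sym2.eq_iff] at hmem
      rcases hmem with ⟨h', -⟩ | ⟨h', -⟩
      · exact hne h'.symm
      · exact h2.ne h'
  obtain ⟨w, c, hc, hlc⟩ := exists_cycle_of_two_paths (2 * q1.length + q2.length)
    q1 q2 le_rfl hq1p hq2p hqne
  have hgle : (g : ℕ∞) ≤ c.length := hg w c hc
  rw [Nat.cast_le] at hgle
  have hl1 : q1.length = G.dist p v := by rw [hq1def, Walk.length_concat]; omega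
  have hl2 : q2.length = G.dist p v := by rw [hq2def, Walk.length_concat]; omega
  omega

lemma walk_parity (f : V → Bool) (hf : ∀ u v, G.Adj u v → f u = !f v) :
    ∀ {u v : V} (w : G.Walk u v), Even w.length ↔ (f u = f v) := by
  intro u v w
  induction w with
  | nil => simp
  | @cons a x b h q ih =>
    rw [Walk.length_cons, Nat.even_add_one, ih, hf a x h]
    cases f x <;> cases f b <;> simp

lemma card_mul_eq_card_mul [DecidableRel G.Adj] {A B : Finset V} {m n : ℕ}
    (hA : ∀ u ∈ A, (B.filter (fun v => G.Adj u v)).card = m)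
    (hB : ∀ v ∈ B, (A.filter (fun u => G.Adj u v)).card = n) :
    A.card * m = B.card * n := by
  classical
  have key : ∑ u ∈ A, (B.filter (fun v => G.Adj u v)).card
      = ∑ v ∈ B, (A.filter (fun u => G.Adj u v)).card := by
    simp only [Finset.card_filter]
    exact Finset.sum_comm
  rw [Finset.sum_congr rfl hA, Finset.sum_congr rfl hB, Finset.sum_const, smul_eq_mul,
    Finset.sum_const, smul_eq_mul] at key
  exact key

end GenHexAux

section MainProof

variable {P L : Type*}

theorem generalized_hexagon_card_points' [Fintype P] [Fintype L]
    {I : P → L → Prop} {s t : ℕ} (hs : 1 ≤ s) (ht : 1 ≤ t)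
    (hhex : IsGenPolygon I 6 s t) :
    Fintype.card P = (1 + s) * (1 + s * t + s ^ 2 * t ^ 2) := by
  classical
  obtain ⟨p₀⟩ := hhex.pts_nonempty
  set G := incidenceGraph I with hG
  -- basic facts about the incidence graph
  have hadj_cases : ∀ u v : P ⊕ L, G.Adj u v → u.isLeft = !v.isLeft := by
    intro u v h
    cases u <;> cases v <;> simp_all [hG, incidenceGraph, IncAdj]
  have hreach : ∀ u v : P ⊕ L, G.Reachable u v := by
    intro u v
    apply SimpleGraph.reachable_of_edist_ne_top
    intro htop
    have h := SimpleGraph.edist_le_ediam (G := G) (u := u) (v := v)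
    rw [hhex.ediam_eq, htop] at h
    simp at h
  have hdist6 : ∀ u v : P ⊕ L, G.dist u v ≤ 6 := by
    intro u v
    have h := SimpleGraph.edist_le_ediam (G := G) (u := u) (v := v)
    rw [hhex.ediam_eq] at h
    have h2 := ENat.toNat_le_toNat h (by simp)
    simpa [SimpleGraph.dist] using h2
  have hgirth : ∀ (v : P ⊕ L) (c : G.Walk v v), c.IsCycle → ((12 : ℕ) : ℕ∞) ≤ c.length := by
    have h12 : ((12 : ℕ) : ℕ∞) ≤ G.egirth := by
      rw [hhex.egirth_eq]; norm_num
    exact fun v c hc => le_trans h12 (SimpleGraph.le_egirth.mp le_rfl v c hc)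
  -- levels
  set D : ℕ → Finset (P ⊕ L) :=
    fun k => Finset.univ.filter (fun v => G.dist (Sum.inl p₀) v = k) with hDdef
  have hmemD : ∀ (k : ℕ) (v : P ⊕ L), v ∈ D k ↔ G.dist (Sum.inl p₀) v = k := by
    intro k v; simp [hDdef]
  -- parity
  have hpar : ∀ v : P ⊕ L, Even (G.dist (Sum.inl p₀) v) ↔ v.isLeft = true := by
    intro v
    obtain ⟨w, hw⟩ := (hreach (Sum.inl p₀) v).exists_walk_length_eq_dist
    rw [← hw, GenHexAux.walk_parity Sum.isLeft hadj_cases w]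
    cases v <;> simp
  have hpar2 : ∀ v : P ⊕ L, G.dist (Sum.inl p₀) v % 2 = if v.isLeft = true then 0 else 1 := by
    intro v
    have h1 := hpar v
    rw [Nat.even_iff] at h1
    cases hb : v.isLeft with
    | false => simp [hb] at h1 ⊢; omega
    | true => simp [hb] at h1 ⊢; exact h1
  -- existence of a predecessor
  have hpredex : ∀ (v : P ⊕ L) (k : ℕ), G.dist (Sum.inl p₀) v = k + 1 →
      ∃ u, G.Adj u v ∧ G.dist (Sum.inl p₀) u = k := by
    intro v k hv
    obtain ⟨w, hw⟩ := (hreach v (Sum.inl p₀)).exists_walk_length_eq_dist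
    have hwl : w.length = k + 1 := by rw [hw, SimpleGraph.dist_comm]; exact hv
    cases w with
    | nil => simp at hwl
    | @cons _ u _ h rest =>
      refine ⟨u, h.symm, ?_⟩
      have hrl : rest.length = k := by simpa using hwl
      have hle : G.dist (Sum.inl p₀) u ≤ k := by
        have h3 := SimpleGraph.dist_le rest.reverse
        rwa [SimpleGraph.Walk.length_reverse, hrl] at h3
      have hge : k ≤ G.dist (Sum.inl p₀) u := by
        by_contra hlt
        push_neg at hlt
        obtain ⟨wu, hwu⟩ := (hreach (Sum.inl p₀) u).exists_walk_length_eq_dist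
        have hdl := SimpleGraph.dist_le (wu.concat h.symm)
        rw [SimpleGraph.Walk.length_concat, hwu] at hdl
        omega
      omega
  -- adjacent vertices have distances differing by exactly one
  have hadjd : ∀ u v : P ⊕ L, G.Adj u v →
      (G.dist (Sum.inl p₀) v = G.dist (Sum.inl p₀) u + 1 ∨
       G.dist (Sum.inl p₀) u = G.dist (Sum.inl p₀) v + 1) := by
    intro u v h
    have h1 : G.dist (Sum.inl p₀) v ≤ G.dist (Sum.inl p₀) u + 1 := by
      obtain ⟨wu, hwu⟩ := (hreach (Sum.inl p₀) u).exists_walk_length_eq_dist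
      have h3 := SimpleGraph.dist_le (wu.concat h)
      rwa [SimpleGraph.Walk.length_concat, hwu] at h3
    have h2 : G.dist (Sum.inl p₀) u ≤ G.dist (Sum.inl p₀) v + 1 := by
      obtain ⟨wv, hwv⟩ := (hreach (Sum.inl p₀) v).exists_walk_length_eq_dist
      have h3 := SimpleGraph.dist_le (wv.concat h.symm)
      rwa [SimpleGraph.Walk.length_concat, hwv] at h3
    have hne : G.dist (Sum.inl p₀) u % 2 ≠ G.dist (Sum.inl p₀) v % 2 := by
      rw [hpar2 u, hpar2 v, hadj_cases u v h]
      cases Sum.isLeft v <;> simp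
    omega
  -- uniqueness of the predecessor
  have hpredu : ∀ (v u1 u2 : P ⊕ L), G.dist (Sum.inl p₀) v ≤ 5 →
      G.Adj u1 v → G.Adj u2 v →
      G.dist (Sum.inl p₀) u1 + 1 = G.dist (Sum.inl p₀) v →
      G.dist (Sum.inl p₀) u2 + 1 = G.dist (Sum.inl p₀) v → u1 = u2 := by
    intro v u1 u2 h5 a1 a2 e1 e2
    exact GenHexAux.pred_unique hgirth a1 a2 (hreach _ _) (hreach _ _) e1 e2 (by omega)
  -- degrees
  have hdegP : ∀ pp : P,
      (Finset.univ.filter fun w : P ⊕ L => G.Adj (Sum.inl pp) w).card = t + 1 := by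
    intro pp
    have himg : (Finset.univ.filter fun w : P ⊕ L => G.Adj (Sum.inl pp) w)
        = (Finset.univ.filter fun l : L => I pp l).map ⟨Sum.inr, Sum.inr_injective⟩ := by
      ext w
      cases w with
      | inl q => simp [hG, incidenceGraph, IncAdj]
      | inr l => simp [hG, incidenceGraph, IncAdj]
    rw [himg, Finset.card_map]
    have hc := hhex.point_card pp
    rw [Set.ncard_eq_toFinset_card'] at hc
    simpa [Set.toFinset_setOf] using hc
  have hdegL : ∀ l : L,
      (Finset.univ.filter fun w : P ⊕ L => G.Adj (Sum.inr l) w).card = s + 1 := by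
    intro l
    have himg : (Finset.univ.filter fun w : P ⊕ L => G.Adj (Sum.inr l) w)
        = (Finset.univ.filter fun q : P => I q l).map ⟨Sum.inl, Sum.inl_injective⟩ := by
      ext w
      cases w with
      | inl q => simp [hG, incidenceGraph, IncAdj]
      | inr l' => simp [hG, incidenceGraph, IncAdj]
    rw [himg, Finset.card_map]
    have hc := hhex.line_card l
    rw [Set.ncard_eq_toFinset_card'] at hc
    simpa [Set.toFinset_setOf] using hc
  -- vertices at even levels are points, at odd levels lines
  have hlevel_even : ∀ (v : P ⊕ L), G.dist (Sum.inl p₀) v % 2 = 0 → ∃ pp : P, v = Sum.inl pp := by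
    intro v hv
    have h2 := hpar2 v
    cases v with
    | inl pp => exact ⟨pp, rfl⟩
    | inr l => simp at h2; omega
  have hlevel_odd : ∀ (v : P ⊕ L), G.dist (Sum.inl p₀) v % 2 = 1 → ∃ l : L, v = Sum.inr l := by
    intro v hv
    have h2 := hpar2 v
    cases v with
    | inl pp => simp at h2; omega
    | inr l => exact ⟨l, rfl⟩
  -- degrees by level parity
  have hdeg_even : ∀ (v : P ⊕ L), G.dist (Sum.inl p₀) v % 2 = 0 →
      (Finset.univ.filter fun w => G.Adj v w).card = t + 1 := by
    intro v hv
    obtain ⟨pp, rfl⟩ := hlevel_even v hv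
    exact hdegP pp
  have hdeg_odd : ∀ (v : P ⊕ L), G.dist (Sum.inl p₀) v % 2 = 1 →
      (Finset.univ.filter fun w => G.Adj v w).card = s + 1 := by
    intro v hv
    obtain ⟨l, rfl⟩ := hlevel_odd v hv
    exact hdegL l
  -- backward neighbor count is one, on levels 1..5
  have hbwd1 : ∀ (k : ℕ), k + 1 ≤ 5 → ∀ v ∈ D (k+1),
      ((D k).filter (fun u => G.Adj u v)).card = 1 := by
    intro k hk5 v hv
    rw [hmemD] at hv
    obtain ⟨u₀, hu₀a, hu₀d⟩ := hpredex v k hv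
    rw [Finset.card_eq_one]
    refine ⟨u₀, ?_⟩
    ext u
    simp only [Finset.mem_filter, Finset.mem_singleton, hmemD]
    constructor
    · rintro ⟨hud, hua⟩
      exact hpredu v u u₀ (by omega) hua hu₀a (by omega) (by omega)
    · rintro rfl
      exact ⟨hu₀d, hu₀a⟩
  -- forward neighbor count on levels 1..5
  have hfwd : ∀ (k : ℕ) (u : P ⊕ L) (degu : ℕ), 1 ≤ k → k ≤ 5 → u ∈ D k →
      (Finset.univ.filter fun w => G.Adj u w).card = degu →
      ((D (k+1)).filter (fun w => G.Adj u w)).card = degu - 1 := by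
    intro k u degu hk1 hk5 hu hdeg
    rw [hmemD] at hu
    have hsplit2 : (Finset.univ.filter fun w => G.Adj u w) =
        ((D (k+1)).filter fun w => G.Adj u w) ∪ ((D (k-1)).filter fun w => G.Adj u w) := by
      ext w
      simp only [Finset.mem_filter, Finset.mem_union, Finset.mem_univ, true_and, hmemD]
      constructor
      · intro hw
        rcases hadjd u w hw with h' | h'
        · left; exact ⟨by omega, hw⟩
        · right; exact ⟨by omega, hw⟩
      · rintro (⟨-, h⟩ | ⟨-, h⟩) <;> exact h
    have hdisj : Disjoint ((D (k+1)).filter fun w => G.Adj u w)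
        ((D (k-1)).filter fun w => G.Adj u w) := by
      rw [Finset.disjoint_left]
      intro w hw1 hw2
      simp only [Finset.mem_filter, hmemD] at hw1 hw2
      omega
    have hback : ((D (k-1)).filter fun w => G.Adj u w).card = 1 := by
      have hflip : ((D (k-1)).filter fun w => G.Adj u w)
          = ((D (k-1)).filter fun w => G.Adj w u) := by
        ext w
        simp only [Finset.mem_filter]
        rw [G.adj_comm]
      have hk' : k - 1 + 1 = k := by omega
      rw [hflip]
      exact hbwd1 (k-1) (by omega) u (by rw [hmemD, hk']; exact hu)
    rw [hsplit2, Finset.card_union_of_disjoint hdisj, hback] at hdeg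
    omega
  -- step counting
  have hstep : ∀ (k m : ℕ), k + 1 ≤ 5 →
      (∀ u ∈ D k, ((D (k+1)).filter (fun w => G.Adj u w)).card = m) →
      (D k).card * m = (D (k+1)).card := by
    intro k m hk5 hm
    have h := GenHexAux.card_mul_eq_card_mul (G := G) (A := D k) (B := D (k+1)) hm
      (hbwd1 k hk5)
    simpa using h
  -- level cardinalities
  have hD0 : (D 0).card = 1 := by
    rw [Finset.card_eq_one]
    refine ⟨Sum.inl p₀, ?_⟩
    ext v
    rw [hmemD, Finset.mem_singleton]
    rw [(hreach (Sum.inl p₀) v).dist_eq_zero_iff]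
    exact eq_comm
  have hD1 : (D 1).card = t + 1 := by
    have h0 : ∀ u ∈ D 0, ((D 1).filter (fun w => G.Adj u w)).card = t + 1 := by
      intro u hu
      rw [hmemD] at hu
      have hall : (D 1).filter (fun w => G.Adj u w)
          = Finset.univ.filter (fun w => G.Adj u w) := by
        ext w
        simp only [Finset.mem_filter, Finset.mem_univ, true_and, hmemD]
        constructor
        · rintro ⟨-, h⟩; exact h
        · intro h
          rcases hadjd u w h with h' | h' <;> [skip; omega]
          exact ⟨by omega, h⟩
      rw [hall]
      exact hdeg_even u (by omega)
    have h := hstep 0 (t+1) (by norm_num) h0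
    rw [hD0, one_mul] at h
    simp only [Nat.reduceAdd] at h
    exact h.symm
  have hDnext : ∀ (k m : ℕ), 1 ≤ k → k + 1 ≤ 5 →
      (∀ v : P ⊕ L, G.dist (Sum.inl p₀) v % 2 = k % 2 →
        (Finset.univ.filter fun w => G.Adj v w).card = m + 1) →
      (D k).card * m = (D (k+1)).card := by
    intro k m hk1 hk5 hdeg
    apply hstep k m hk5
    intro u hu
    have hud := (hmemD k u).mp hu
    have h := hfwd k u (m+1) hk1 (by omega) hu (hdeg u (by omega))
    simpa using h
  have hD2 : (D 2).card = (t + 1) * s := by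
    have h := hDnext 1 s (by norm_num) (by norm_num)
      (fun v hv => hdeg_odd v (by omega))
    rw [hD1] at h
    simp only [Nat.reduceAdd] at h
    exact h.symm
  have hD3 : (D 3).card = (t + 1) * s * t := by
    have h := hDnext 2 t (by norm_num) (by norm_num)
      (fun v hv => hdeg_even v (by omega))
    rw [hD2] at h
    simp only [Nat.reduceAdd] at h
    exact h.symm
  have hD4 : (D 4).card = (t + 1) * s * t * s := by
    have h := hDnext 3 s (by norm_num) (by norm_num)
      (fun v hv => hdeg_odd v (by omega))
    rw [hD3] at h
    simp only [Nat.reduceAdd] at h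
    exact h.symm
  have hD5 : (D 5).card = (t + 1) * s * t * s * t := by
    have h := hDnext 4 t (by norm_num) (by norm_num)
      (fun v hv => hdeg_even v (by omega))
    rw [hD4] at h
    simp only [Nat.reduceAdd] at h
    exact h.symm
  -- level 6
  have hbwd6 : ∀ v ∈ D 6, ((D 5).filter (fun u => G.Adj u v)).card = t + 1 := by
    intro v hv
    rw [hmemD] at hv
    have hall : (D 5).filter (fun u => G.Adj u v)
        = Finset.univ.filter (fun u => G.Adj u v) := by
      ext u
      simp only [Finset.mem_filter, Finset.mem_univ, true_and, hmemD]
      constructor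
      · rintro ⟨-, h⟩; exact h
      · intro h
        have h6 := hdist6 (Sum.inl p₀) u
        rcases hadjd u v h with h' | h' <;> [exact ⟨by omega, h⟩; omega]
    rw [hall]
    have hflip : Finset.univ.filter (fun u => G.Adj u v)
        = Finset.univ.filter (fun w => G.Adj v w) := by
      ext u
      simp only [Finset.mem_filter]
      rw [G.adj_comm]
    rw [hflip]
    exact hdeg_even v (by omega)
  have hfwd5 : ∀ u ∈ D 5, ((D 6).filter (fun w => G.Adj u w)).card = s := by
    intro u hu
    have hud := (hmemD 5 u).mp hu
    have h := hfwd 5 u (s+1) (by norm_num) (by norm_num) hu (hdeg_odd u (by omega))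
    simpa using h
  have h6 := GenHexAux.card_mul_eq_card_mul (G := G) (A := D 5) (B := D 6) hfwd5 hbwd6
  have hD6 : (D 6).card = s * t * (s * t) * s := by
    rw [hD5] at h6
    have hcalc : (t + 1) * (s * t * (s * t) * s) = (t + 1) * (D 6).card :=
      calc (t + 1) * (s * t * (s * t) * s) = (t + 1) * s * t * s * t * s := by ring
      _ = (D 6).card * (t + 1) := h6
      _ = (t + 1) * (D 6).card := by ring
    exact (Nat.eq_of_mul_eq_mul_left (Nat.succ_pos t) hcalc).symm
  -- assemble
  have hPcard : Fintype.card P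
      = (Finset.univ.filter (fun v : P ⊕ L => v.isLeft = true)).card := by
    have himg : (Finset.univ.filter (fun v : P ⊕ L => v.isLeft = true))
        = Finset.univ.map ⟨Sum.inl, Sum.inl_injective⟩ := by
      ext v
      cases v <;> simp
    rw [himg, Finset.card_map, Finset.card_univ]
  have hsplit : Finset.univ.filter (fun v : P ⊕ L => v.isLeft = true)
      = ((D 0 ∪ D 2) ∪ D 4) ∪ D 6 := by
    ext v
    simp only [Finset.mem_filter, Finset.mem_union, Finset.mem_univ, true_and, hmemD]
    constructor
    · intro hL
      have h2 := hpar2 v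
      rw [hL] at h2
      simp at h2
      have h6 := hdist6 (Sum.inl p₀) v
      omega
    · intro hcase
      have h2 := hpar2 v
      cases hb : v.isLeft with
      | false =>
        rw [hb] at h2
        simp at h2
        omega
      | true => rfl
  have hdisj1 : Disjoint (D 0) (D 2) := by
    rw [Finset.disjoint_left]; intro v h1 h2
    rw [hmemD] at h1 h2; omega
  have hdisj2 : Disjoint (D 0 ∪ D 2) (D 4) := by
    rw [Finset.disjoint_left]; intro v h1 h2
    rcases Finset.mem_union.mp h1 with h1 | h1 <;> rw [hmemD] at h1 h2 <;> omega
  have hdisj3 : Disjoint ((D 0 ∪ D 2) ∪ D 4) (D 6) := by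
    rw [Finset.disjoint_left]; intro v h1 h2
    rcases Finset.mem_union.mp h1 with h1 | h1
    · rcases Finset.mem_union.mp h1 with h1 | h1 <;> rw [hmemD] at h1 h2 <;> omega
    · rw [hmemD] at h1 h2; omega
  rw [hPcard, hsplit, Finset.card_union_of_disjoint hdisj3,
    Finset.card_union_of_disjoint hdisj2, Finset.card_union_of_disjoint hdisj1,
    hD0, hD2, hD4, hD6]
  ring

end MainProof


/-- A finite generalized hexagon of order `(s, t)` has exactly `(1 + s)(1 + st + s²t²)`
points. -/
theorem generalized_hexagon_card_points {P L : Type*} [Fintype P] [Fintype L]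
    {I : P → L → Prop} {s t : ℕ} (hs : 1 ≤ s) (ht : 1 ≤ t)
    (hhex : IsGenPolygon I 6 s t) :
    Fintype.card P = (1 + s) * (1 + s * t + s ^ 2 * t ^ 2) := by
  exact generalized_hexagon_card_points' hs ht hhex
end

section
/- Let H = (P, L, I) be a finite generalized hexagon of order (s,t) with s, t ≥ 1, let H' = (P', L') be a subhexagon of H of order (s, t') with t' ≥ 1, and let O be a distance-2 ovoid of H. Then O ∩ P' is a distance-2 ovoid of H', and |O ∩ P'| = s²t'² + st' + 1. -/
open SimpleGraph
section AuxCounting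

open SimpleGraph Finset

variable {A B : Type*} {J : A → B → Prop}

lemma incAdj_isLeft {x y : A ⊕ B} (h : (incidenceGraph J).Adj x y) :
    x.isLeft = !y.isLeft := by
  cases x <;> cases y <;> simp_all [incidenceGraph, IncAdj]

lemma incWalk_parity {x y : A ⊕ B} (w : (incidenceGraph J).Walk x y) :
    Even w.length ↔ (x.isLeft = y.isLeft) := by
  induction w with
  | nil => simp
  | cons h p ih =>
    have hxy := incAdj_isLeft h
    rw [SimpleGraph.Walk.length_cons, Nat.even_add_one, ih, hxy]
    cases (Sum.isLeft _) <;> cases (Sum.isLeft _) <;> simp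

end AuxCounting
lemma genPolygon_basics {A B : Type*} {J : A → B → Prop} {s t : ℕ}
    (h : IsGenPolygon J 6 s t) :
    (∀ u v : A ⊕ B, (incidenceGraph J).Reachable u v) ∧
    (∀ u v : A ⊕ B, (incidenceGraph J).dist u v ≤ 6) ∧
    (∀ (x : A ⊕ B) (c : (incidenceGraph J).Walk x x), c.IsCycle → 12 ≤ c.length) := by
  set G := incidenceGraph J with hG
  have hedist : ∀ u v : A ⊕ B, G.edist u v ≤ 6 := by
    intro u v
    calc G.edist u v ≤ G.ediam := SimpleGraph.edist_le_ediam
      _ = 6 := by rw [h.ediam_eq]; norm_num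
  have hreach : ∀ u v : A ⊕ B, G.Reachable u v := by
    intro u v
    exact SimpleGraph.reachable_of_edist_ne_top (by
      intro htop
      have h2 := hedist u v
      rw [htop] at h2
      exact absurd h2 (by simp))
  refine ⟨hreach, ?_, ?_⟩
  · intro u v
    have := ENat.toNat_le_toNat (hedist u v) (by simp)
    simpa [SimpleGraph.dist] using this
  · intro x c hc
    have h12 : (12 : ℕ∞) ≤ G.egirth := by rw [h.egirth_eq]; norm_num
    have := SimpleGraph.le_egirth.mp h12 x c hc
    exact_mod_cast this
section Steps

open SimpleGraph Walk

variable {A B : Type*} {J : A → B → Prop}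
variable (hreach : ∀ u v : A ⊕ B, (incidenceGraph J).Reachable u v)

include hreach in
lemma inc_dist_parity (u v : A ⊕ B) :
    Even ((incidenceGraph J).dist u v) ↔ u.isLeft = v.isLeft := by
  obtain ⟨p, hp⟩ := (hreach u v).exists_walk_length_eq_dist
  rw [← hp]; exact incWalk_parity p

include hreach in
lemma inc_step {r x y : A ⊕ B} (hxy : (incidenceGraph J).Adj x y) :
    (incidenceGraph J).dist r y ≤ (incidenceGraph J).dist r x + 1 := by
  obtain ⟨p, hp⟩ := (hreach r x).exists_walk_length_eq_dist
  have := SimpleGraph.dist_le (p.concat hxy)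
  rwa [Walk.length_concat, hp] at this

include hreach in
lemma inc_dichot {r x y : A ⊕ B} (hxy : (incidenceGraph J).Adj x y) :
    (incidenceGraph J).dist r y = (incidenceGraph J).dist r x + 1 ∨
    (incidenceGraph J).dist r x = (incidenceGraph J).dist r y + 1 := by
  have h1 := inc_step hreach (r := r) hxy
  have h2 := inc_step hreach (r := r) hxy.symm
  have hne : (incidenceGraph J).dist r x ≠ (incidenceGraph J).dist r y := by
    intro he
    have p1 := inc_dist_parity hreach r x
    have p2 := inc_dist_parity hreach r y
    rw [he] at p1
    have hxy' := incAdj_isLeft hxy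
    have : (r.isLeft = x.isLeft) ↔ (r.isLeft = y.isLeft) := p1.symm.trans p2
    rw [hxy'] at this
    rcases r with r | r <;> rcases y with y | y <;> simp_all
  omega

include hreach in
lemma inc_down {r v : A ⊕ B} (h0 : (incidenceGraph J).dist r v ≠ 0) :
    ∃ u, (incidenceGraph J).Adj u v ∧
      (incidenceGraph J).dist r u + 1 = (incidenceGraph J).dist r v := by
  obtain ⟨p, hp⟩ := (hreach r v).exists_walk_length_eq_dist
  have hne : v ≠ r := by
    rintro rfl
    rw [SimpleGraph.dist_comm, SimpleGraph.dist_self] at h0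
    exact h0 rfl
  obtain ⟨u, huv, q, hq⟩ := Walk.exists_eq_cons_of_ne hne p.reverse
  refine ⟨u, huv.symm, ?_⟩
  have hlq : q.length + 1 = (incidenceGraph J).dist r v := by
    have := congrArg Walk.length hq
    rw [Walk.length_reverse, Walk.length_cons, hp] at this
    omega
  have hle : (incidenceGraph J).dist r u ≤ q.length := by
    have := SimpleGraph.dist_le q.reverse
    rwa [Walk.length_reverse] at this
  have hge := inc_step hreach (r := r) huv.symm
  omega

end Steps
section Uniq

open SimpleGraph Walk

variable {A B : Type*} {J : A → B → Prop}

lemma inc_down_uniq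
    (hreach : ∀ u v : A ⊕ B, (incidenceGraph J).Reachable u v)
    (hcyc : ∀ (x : A ⊕ B) (c : (incidenceGraph J).Walk x x), c.IsCycle → 12 ≤ c.length)
    {r v u u' : A ⊕ B} (hv5 : (incidenceGraph J).dist r v ≤ 5)
    (hu : (incidenceGraph J).Adj u v) (hu' : (incidenceGraph J).Adj u' v)
    (hdu : (incidenceGraph J).dist r u + 1 = (incidenceGraph J).dist r v)
    (hdu' : (incidenceGraph J).dist r u' + 1 = (incidenceGraph J).dist r v) :
    u = u' := by
  classical
  set G := incidenceGraph J with hG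
  by_contra hne
  obtain ⟨p1, hp1, hl1⟩ := (hreach r u).exists_path_of_dist
  obtain ⟨p2, hp2, hl2⟩ := (hreach r u').exists_path_of_dist
  have hvp1 : v ∉ p1.support := by
    intro hv
    have hlt := Walk.length_takeUntil_le p1 hv
    have hd := SimpleGraph.dist_le (p1.takeUntil v hv)
    omega
  have hvp2 : v ∉ p2.support := by
    intro hv
    have hlt := Walk.length_takeUntil_le p2 hv
    have hd := SimpleGraph.dist_le (p2.takeUntil v hv)
    omega
  set W : G.Walk u u' := p1.reverse.append p2 with hW
  set Q := W.bypass with hQ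
  have hQpath : Q.IsPath := Walk.bypass_isPath W
  have hQlen : Q.length ≤ p1.length + p2.length := by
    have := Walk.length_bypass_le W
    rwa [Walk.length_append, Walk.length_reverse] at this
  have hvQ : v ∉ Q.support := by
    intro hv
    have hmem := Walk.support_bypass_subset W hv
    rw [Walk.support_append] at hmem
    rcases List.mem_append.mp hmem with hm | hm
    · rw [Walk.support_reverse] at hm
      exact hvp1 (List.mem_reverse.mp hm)
    · exact hvp2 (List.mem_of_mem_tail hm)
  have hR : (Walk.cons hu.symm Q).IsPath := by
    rw [Walk.cons_isPath_iff]
    exact ⟨hQpath, hvQ⟩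
  have hC : (Walk.cons hu' (Walk.cons hu.symm Q)).IsCycle := by
    rw [Walk.cons_isCycle_iff]
    refine ⟨hR, ?_⟩
    rw [Walk.edges_cons]
    intro hmem
    rcases List.mem_cons.mp hmem with he | he
    · rw [Sym2.eq_iff] at he
      rcases he with ⟨h1, h2⟩ | ⟨h1, h2⟩
      · exact hu'.ne h1
      · exact hne h1.symm
    · exact hvQ (Walk.snd_mem_support_of_mem_edges Q he)
  have h12 := hcyc _ _ hC
  have hClen : (Walk.cons hu' (Walk.cons hu.symm Q)).length = Q.length + 2 := by
    simp [Walk.length_cons]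
  omega

end Uniq
section Count

open SimpleGraph Finset

private lemma mycard_filter {γ : Type*} (p : γ → Prop) [DecidablePred p] (s : Finset γ) :
    (s.filter p).card = ∑ a ∈ s, if p a then 1 else 0 := by
  rw [Finset.sum_ite, Finset.sum_const, Finset.sum_const, smul_eq_mul, mul_one,
    smul_eq_mul, mul_zero, add_zero]

private lemma transform_sum {γ δ : Type*} [Fintype γ] [Fintype δ]
    (p : γ → Prop) (q : δ → Prop) (rel : γ → δ → Prop)
    [DecidablePred p] [DecidablePred q] [∀ x y, Decidable (rel x y)] :
    ∑ x ∈ Finset.univ.filter p, (Finset.univ.filter fun y => rel x y ∧ q y).card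
    = ∑ x : γ, ∑ y : δ, if p x ∧ rel x y ∧ q y then 1 else 0 := by
  rw [Finset.sum_filter]
  apply Finset.sum_congr rfl
  intro x _
  by_cases hp : p x
  · rw [if_pos hp, mycard_filter]
    exact Finset.sum_congr rfl fun y _ => by simp [hp]
  · rw [if_neg hp]
    symm
    apply Finset.sum_eq_zero
    intro y _
    simp [hp]

private lemma constsum {γ : Type*} [Fintype γ] (p : γ → Prop) [DecidablePred p]
    (f : γ → ℕ) (m : ℕ) (hf : ∀ x, p x → f x = m) :
    ∑ x ∈ Finset.univ.filter p, f x = (Finset.univ.filter p).card * m := by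
  rw [Finset.sum_congr rfl (fun x hx => hf x (Finset.mem_filter.mp hx).2),
    Finset.sum_const, smul_eq_mul]

end Count
section Main

open SimpleGraph Finset

lemma genPolygon_card_B {A B : Type*} [Fintype A] [Fintype B] {J : A → B → Prop} {s t : ℕ}
    (h : IsGenPolygon J 6 s t) :
    Fintype.card B = (t + 1) * (s ^ 2 * t ^ 2 + s * t + 1) := by
  classical
  obtain ⟨hreach, hdist6, hcyc⟩ := genPolygon_basics h
  obtain ⟨a0⟩ := h.pts_nonempty
  have hb0ex : {b | J a0 b}.Nonempty := by
    apply Set.nonempty_of_ncard_ne_zero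
    rw [h.point_card a0]
    omega
  obtain ⟨b₀, hb₀⟩ := hb0ex
  set r : A ⊕ B := Sum.inr b₀ with hr
  have hlineF : ∀ b : B, (Finset.univ.filter fun a => J a b).card = s + 1 := by
    intro b
    have := h.line_card b
    rwa [Set.ncard_eq_toFinset_card', Set.toFinset_setOf] at this
  have hpointF : ∀ a : A, (Finset.univ.filter fun b => J a b).card = t + 1 := by
    intro a
    have := h.point_card a
    rwa [Set.ncard_eq_toFinset_card', Set.toFinset_setOf] at this
  have hadjAB : ∀ (a : A) (b : B), (incidenceGraph J).Adj (Sum.inl a) (Sum.inr b) ↔ J a b := by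
    intro a b
    constructor
    · intro hadj; exact hadj
    · intro hJ; exact hJ
  have hDA : ∀ a : A, ¬ Even ((incidenceGraph J).dist r (Sum.inl a)) := by
    intro a hev
    have := (inc_dist_parity hreach r (Sum.inl a)).mp hev
    simp [hr] at this
  have hDB : ∀ b : B, Even ((incidenceGraph J).dist r (Sum.inr b)) := by
    intro b
    exact (inc_dist_parity hreach r (Sum.inr b)).mpr (by simp [hr])
  -- down degree for points
  have hdownA : ∀ (a : A) (k : ℕ), (incidenceGraph J).dist r (Sum.inl a) = k + 1 → k + 1 ≤ 5 →
      (Finset.univ.filter fun b => J a b ∧ (incidenceGraph J).dist r (Sum.inr b) = k).card = 1 := by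
    intro a k hk hk5
    obtain ⟨u, hu, hud⟩ := inc_down hreach (r := r) (v := Sum.inl a) (by omega)
    obtain ⟨b, rfl⟩ : ∃ b, u = Sum.inr b := by
      rcases u with a' | b
      · exfalso
        exact hu
      · exact ⟨b, rfl⟩
    rw [Finset.card_eq_one]
    refine ⟨b, ?_⟩
    ext b'
    simp only [Finset.mem_filter, Finset.mem_univ, true_and, Finset.mem_singleton]
    constructor
    · rintro ⟨hJ, hd⟩
      have heq : (Sum.inr b' : A ⊕ B) = Sum.inr b := by
        refine inc_down_uniq hreach hcyc (v := Sum.inl a) (r := r) (by omega)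
          ((hadjAB a b').mpr hJ).symm hu (by omega) (by omega)
      exact Sum.inr_injective heq
    · rintro rfl
      exact ⟨(hadjAB _ _).mp hu.symm, by omega⟩
  -- down degree for lines
  have hdownB : ∀ (b : B) (k : ℕ), (incidenceGraph J).dist r (Sum.inr b) = k + 1 → k + 1 ≤ 5 →
      (Finset.univ.filter fun a => J a b ∧ (incidenceGraph J).dist r (Sum.inl a) = k).card = 1 := by
    intro b k hk hk5
    obtain ⟨u, hu, hud⟩ := inc_down hreach (r := r) (v := Sum.inr b) (by omega)
    obtain ⟨a, rfl⟩ : ∃ a, u = Sum.inl a := by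
      rcases u with a | b'
      · exact ⟨a, rfl⟩
      · exfalso
        exact hu
    rw [Finset.card_eq_one]
    refine ⟨a, ?_⟩
    ext a'
    simp only [Finset.mem_filter, Finset.mem_univ, true_and, Finset.mem_singleton]
    constructor
    · rintro ⟨hJ, hd⟩
      have heq : (Sum.inl a' : A ⊕ B) = Sum.inl a := by
        refine inc_down_uniq hreach hcyc (v := Sum.inr b) (r := r) (by omega)
          ((hadjAB a' b).mpr hJ) hu (by omega) (by omega)
      exact Sum.inl_injective heq
    · rintro rfl
      exact ⟨(hadjAB _ _).mp hu, by omega⟩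
  -- up degree for points
  have hupA : ∀ (a : A) (k : ℕ), (incidenceGraph J).dist r (Sum.inl a) = k + 1 → k + 1 ≤ 5 →
      (Finset.univ.filter fun b => J a b ∧ (incidenceGraph J).dist r (Sum.inr b) = k + 2).card = t := by
    intro a k hk hk5
    have htot := hpointF a
    have hsplit : (Finset.univ.filter fun b => J a b) =
        (Finset.univ.filter fun b => J a b ∧ (incidenceGraph J).dist r (Sum.inr b) = k) ∪
        (Finset.univ.filter fun b => J a b ∧ (incidenceGraph J).dist r (Sum.inr b) = k + 2) := by
      ext b
      simp only [Finset.mem_filter, Finset.mem_univ, true_and, Finset.mem_union]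
      constructor
      · intro hJ
        rcases inc_dichot hreach (r := r) ((hadjAB a b).mpr hJ) with h1 | h1
        · right; exact ⟨hJ, by omega⟩
        · left; exact ⟨hJ, by omega⟩
      · rintro (⟨hJ, _⟩ | ⟨hJ, _⟩) <;> exact hJ
    have hdisj : Disjoint
        (Finset.univ.filter fun b => J a b ∧ (incidenceGraph J).dist r (Sum.inr b) = k)
        (Finset.univ.filter fun b => J a b ∧ (incidenceGraph J).dist r (Sum.inr b) = k + 2) := by
      rw [Finset.disjoint_left]
      intro b hb1 hb2
      simp only [Finset.mem_filter, Finset.mem_univ, true_and] at hb1 hb2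
      omega
    rw [hsplit, Finset.card_union_of_disjoint hdisj, hdownA a k hk hk5] at htot
    omega
  -- up degree for lines (dist ≥ 2)
  have hupB : ∀ (b : B) (k : ℕ), (incidenceGraph J).dist r (Sum.inr b) = k + 1 → k + 1 ≤ 5 →
      (Finset.univ.filter fun a => J a b ∧ (incidenceGraph J).dist r (Sum.inl a) = k + 2).card = s := by
    intro b k hk hk5
    have htot := hlineF b
    have hsplit : (Finset.univ.filter fun a => J a b) =
        (Finset.univ.filter fun a => J a b ∧ (incidenceGraph J).dist r (Sum.inl a) = k) ∪
        (Finset.univ.filter fun a => J a b ∧ (incidenceGraph J).dist r (Sum.inl a) = k + 2) := by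
      ext a
      simp only [Finset.mem_filter, Finset.mem_univ, true_and, Finset.mem_union]
      constructor
      · intro hJ
        rcases inc_dichot hreach (r := r) ((hadjAB a b).mpr hJ).symm with h1 | h1
        · right; exact ⟨hJ, by omega⟩
        · left; exact ⟨hJ, by omega⟩
      · rintro (⟨hJ, _⟩ | ⟨hJ, _⟩) <;> exact hJ
    have hdisj : Disjoint
        (Finset.univ.filter fun a => J a b ∧ (incidenceGraph J).dist r (Sum.inl a) = k)
        (Finset.univ.filter fun a => J a b ∧ (incidenceGraph J).dist r (Sum.inl a) = k + 2) := by
      rw [Finset.disjoint_left]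
      intro a ha1 ha2
      simp only [Finset.mem_filter, Finset.mem_univ, true_and] at ha1 ha2
      omega
    rw [hsplit, Finset.card_union_of_disjoint hdisj, hdownB b k hk hk5] at htot
    omega
  -- b₀'s up degree
  have hb0up : (Finset.univ.filter fun a => J a b₀ ∧ (incidenceGraph J).dist r (Sum.inl a) = 1).card
      = s + 1 := by
    rw [← hlineF b₀]
    congr 1
    ext a
    simp only [Finset.mem_filter, Finset.mem_univ, true_and]
    constructor
    · rintro ⟨hJ, _⟩; exact hJ
    · intro hJ
      refine ⟨hJ, ?_⟩
      have hle : (incidenceGraph J).dist r (Sum.inl a) ≤ (incidenceGraph J).dist r r + 1 :=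
        inc_step hreach (r := r) ((hadjAB a b₀).mpr hJ).symm
      rw [SimpleGraph.dist_self] at hle
      have := hDA a
      have h0 : (incidenceGraph J).dist r (Sum.inl a) ≠ 0 := by
        intro h0'
        rw [h0'] at this
        exact this (by simp)
      omega
  -- lines at distance 6: all neighbours at distance 5
  have h6B : ∀ b : B, (incidenceGraph J).dist r (Sum.inr b) = 6 →
      (Finset.univ.filter fun a => J a b ∧ (incidenceGraph J).dist r (Sum.inl a) = 5).card = s + 1 := by
    intro b hb
    rw [← hlineF b]
    congr 1
    ext a
    simp only [Finset.mem_filter, Finset.mem_univ, true_and]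
    constructor
    · rintro ⟨hJ, _⟩; exact hJ
    · intro hJ
      refine ⟨hJ, ?_⟩
      have := hdist6 r (Sum.inl a)
      rcases inc_dichot hreach (r := r) ((hadjAB a b).mpr hJ).symm with h1 | h1 <;> omega
  -- the double counting identity
  have hdc : ∀ (da db : ℕ),
      ∑ a ∈ Finset.univ.filter (fun a : A => (incidenceGraph J).dist r (Sum.inl a) = da),
        (Finset.univ.filter fun b => J a b ∧ (incidenceGraph J).dist r (Sum.inr b) = db).card
      = ∑ b ∈ Finset.univ.filter (fun b : B => (incidenceGraph J).dist r (Sum.inr b) = db),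
        (Finset.univ.filter fun a => J a b ∧ (incidenceGraph J).dist r (Sum.inl a) = da).card := by
    intro da db
    rw [transform_sum, transform_sum, Finset.sum_comm]
    refine Finset.sum_congr rfl fun b _ => Finset.sum_congr rfl fun a _ => ?_
    exact if_congr (by tauto) rfl rfl
  -- distance-0 sphere is {b₀}
  have hB0card : (Finset.univ.filter fun b : B =>
      (incidenceGraph J).dist r (Sum.inr b) = 0).card = 1 := by
    rw [Finset.card_eq_one]
    refine ⟨b₀, ?_⟩
    ext b
    simp only [Finset.mem_filter, Finset.mem_univ, true_and, Finset.mem_singleton]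
    constructor
    · intro hd
      have := (hreach r (Sum.inr b)).dist_eq_zero_iff.mp hd
      rw [hr] at this
      exact (Sum.inr_injective this).symm
    · rintro rfl
      rw [hr, SimpleGraph.dist_self]
  -- the six level equations
  have E0 := hdc 1 0
  have E1 := hdc 1 2
  have E2 := hdc 3 2
  have E3 := hdc 3 4
  have E4 := hdc 5 4
  have E5 := hdc 5 6
  rw [constsum _ _ 1 (fun a ha => hdownA a 0 ha (by omega)),
    constsum _ _ (s + 1) (fun b hb => by
      have hb0 : b = b₀ := by
        have := (hreach r (Sum.inr b)).dist_eq_zero_iff.mp hb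
        rw [hr] at this
        exact (Sum.inr_injective this).symm
      subst hb0
      exact hb0up), hB0card, one_mul, mul_one] at E0
  rw [constsum _ _ t (fun a ha => hupA a 0 ha (by omega)),
    constsum _ _ 1 (fun b hb => hdownB b 1 hb (by omega)), E0, mul_one] at E1
  rw [constsum _ _ 1 (fun a ha => hdownA a 2 ha (by omega)),
    constsum _ _ s (fun b hb => hupB b 1 hb (by omega)), mul_one] at E2
  rw [constsum _ _ t (fun a ha => hupA a 2 ha (by omega)),
    constsum _ _ 1 (fun b hb => hdownB b 3 hb (by omega)), mul_one] at E3
  rw [constsum _ _ 1 (fun a ha => hdownA a 4 ha (by omega)),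
    constsum _ _ s (fun b hb => hupB b 3 hb (by omega)), mul_one] at E4
  rw [constsum _ _ t (fun a ha => hupA a 4 ha (by omega)),
    constsum _ _ (s + 1) (fun b hb => h6B b hb)] at E5
  -- odd spheres of lines are empty
  have hodd : ∀ k : ℕ, k % 2 = 1 → (Finset.univ.filter fun b : B =>
      (incidenceGraph J).dist r (Sum.inr b) = k).card = 0 := by
    intro k hk
    rw [Finset.card_eq_zero, Finset.filter_eq_empty_iff]
    intro b _ hd
    have := hDB b
    rw [hd, Nat.even_iff] at this
    omega
  -- total count
  have htotal : Fintype.card B = ∑ k ∈ Finset.range 7,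
      (Finset.univ.filter fun b : B => (incidenceGraph J).dist r (Sum.inr b) = k).card := by
    rw [← Finset.card_univ]
    exact Finset.card_eq_sum_card_fiberwise
      (fun b _ => Finset.mem_range.mpr (by have := hdist6 r (Sum.inr b); omega))
  simp only [Nat.reduceAdd] at E0 E1 E2 E3 E4 E5
  -- value of distance-6 sphere
  have v6 : (Finset.univ.filter fun b : B =>
      (incidenceGraph J).dist r (Sum.inr b) = 6).card = s ^ 2 * t ^ 3 := by
    apply Nat.eq_of_mul_eq_mul_right (show 0 < s + 1 by omega)
    rw [← E5, E4, ← E3, E2, ← E1]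
    ring
  rw [htotal]
  simp only [Finset.sum_range_succ, Finset.sum_range_zero]
  rw [hB0card, hodd 1 rfl, hodd 3 rfl, hodd 5 rfl, ← E3, E2, ← E1, v6]
  ring

end Main
/-- A distance-2 ovoid `O` of a finite generalized hexagon of order `(s, t)` intersects
any subhexagon of order `(s, t')` in a distance-2 ovoid of the subhexagon,
of size `s²t'² + st' + 1`. -/
theorem distance_two_ovoid_inter_subhexagon {P L : Type*} [Fintype P] [Fintype L]
    {I : P → L → Prop} {s t t' : ℕ} (hs : 1 ≤ s) (ht : 1 ≤ t) (ht' : 1 ≤ t')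
    (hhex : IsGenPolygon I 6 s t) {P' : Set P} {L' : Set L}
    (hsub : IsSubhexagon I s t' P' L') (O : Set P)
    (hO : ∀ l : L, ∃! p : P, p ∈ O ∧ I p l) :
    (∀ l : L', ∃! p : P', (p : P) ∈ O ∧ I (p : P) (l : L)) ∧
    (O ∩ P').ncard = s ^ 2 * t' ^ 2 + s * t' + 1 := by
  classical
  obtain ⟨hclosed, hhex'⟩ := hsub
  have part1 : ∀ l : L', ∃! p : P', (p : P) ∈ O ∧ I (p : P) (l : L) := by
    intro l
    obtain ⟨p, ⟨hpO, hpI⟩, hpu⟩ := hO l.1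
    have hpP' : p ∈ P' := hclosed p l.1 l.2 hpI
    refine ⟨⟨p, hpP'⟩, ⟨hpO, hpI⟩, ?_⟩
    rintro ⟨q, hq⟩ ⟨hqO, hqI⟩
    exact Subtype.ext (hpu q ⟨hqO, hqI⟩)
  refine ⟨part1, ?_⟩
  letI : Fintype ↥P' := Fintype.ofFinite _
  letI : Fintype ↥L' := Fintype.ofFinite _
  have hcardL' : L'.ncard = (t' + 1) * (s ^ 2 * t' ^ 2 + s * t' + 1) := by
    rw [← Nat.card_coe_set_eq, Nat.card_eq_fintype_card]
    exact genPolygon_card_B hhex'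
  have S1 : ∑ l : L, (Finset.univ.filter fun p : P => l ∈ L' ∧ p ∈ O ∧ I p l).card
      = ∑ p : P, (Finset.univ.filter fun l : L => l ∈ L' ∧ p ∈ O ∧ I p l).card := by
    simp only [mycard_filter]
    rw [Finset.sum_comm]
  have hperline : ∀ l : L,
      (Finset.univ.filter fun p : P => l ∈ L' ∧ p ∈ O ∧ I p l).card
      = if l ∈ L' then 1 else 0 := by
    intro l
    by_cases hl : l ∈ L'
    · rw [if_pos hl, Finset.card_eq_one]
      obtain ⟨p, ⟨hpO, hpI⟩, hpu⟩ := hO l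
      refine ⟨p, ?_⟩
      ext q
      simp only [Finset.mem_filter, Finset.mem_univ, true_and, Finset.mem_singleton]
      constructor
      · rintro ⟨_, hqO, hqI⟩
        exact hpu q ⟨hqO, hqI⟩
      · rintro rfl
        exact ⟨hl, hpO, hpI⟩
    · rw [if_neg hl, Finset.card_eq_zero, Finset.filter_eq_empty_iff]
      intro p _
      rintro ⟨hl', -⟩
      exact hl hl'
  have hperpoint : ∀ p : P,
      (Finset.univ.filter fun l : L => l ∈ L' ∧ p ∈ O ∧ I p l).card
      = if p ∈ O ∩ P' then t' + 1 else 0 := by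
    intro p
    by_cases hp : p ∈ O ∩ P'
    · rw [if_pos hp]
      obtain ⟨hpO, hpP'⟩ := hp
      have hpc := hhex'.point_card ⟨p, hpP'⟩
      have himg : {l : L | l ∈ L' ∧ I p l}
          = Subtype.val '' {l : ↥L' | I p l.1} := by
        ext l
        simp only [Set.mem_setOf_eq, Set.mem_image]
        constructor
        · rintro ⟨hl, hIl⟩
          exact ⟨⟨l, hl⟩, hIl, rfl⟩
        · rintro ⟨⟨l₀, hl₀⟩, hI, rfl⟩
          exact ⟨hl₀, hI⟩
      have hnc : {l : L | l ∈ L' ∧ I p l}.ncard = t' + 1 := by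
        rw [himg, Set.ncard_image_of_injective _ Subtype.val_injective, hpc]
      rw [Set.ncard_eq_toFinset_card', Set.toFinset_setOf] at hnc
      rw [← hnc]
      congr 1
      ext l
      simp only [Finset.mem_filter, Finset.mem_univ, true_and]
      tauto
    · rw [if_neg hp, Finset.card_eq_zero, Finset.filter_eq_empty_iff]
      intro l _
      rintro ⟨hl, hpO, hpI⟩
      exact hp ⟨hpO, hclosed p l hl hpI⟩
  have hLcount : ∑ l : L, (if l ∈ L' then 1 else 0) = L'.ncard := by
    rw [← mycard_filter (fun l => l ∈ L') Finset.univ]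
    have hfe : L'.toFinset = Finset.univ.filter (fun l => l ∈ L') := by
      ext l
      simp
    rw [Set.ncard_eq_toFinset_card', hfe]
  have hOcount : ∑ p : P, (if p ∈ O ∩ P' then t' + 1 else 0)
      = (O ∩ P').ncard * (t' + 1) := by
    rw [Finset.sum_ite, Finset.sum_const, Finset.sum_const, smul_eq_mul, smul_eq_mul,
      mul_zero, add_zero]
    congr 1
    have hfe : (O ∩ P').toFinset = Finset.univ.filter (fun p => p ∈ O ∩ P') := by
      ext p
      simp
    rw [Set.ncard_eq_toFinset_card', hfe]
  have e1 : ∑ l : L, (Finset.univ.filter fun p : P => l ∈ L' ∧ p ∈ O ∧ I p l).card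
      = ∑ l : L, (if l ∈ L' then 1 else 0) :=
    Finset.sum_congr rfl (fun l _ => hperline l)
  have e2 : ∑ p : P, (Finset.univ.filter fun l : L => l ∈ L' ∧ p ∈ O ∧ I p l).card
      = ∑ p : P, (if p ∈ O ∩ P' then t' + 1 else 0) :=
    Finset.sum_congr rfl (fun p _ => hperpoint p)
  have key : (O ∩ P').ncard * (t' + 1) = (t' + 1) * (s ^ 2 * t' ^ 2 + s * t' + 1) := by
    rw [← hOcount, ← e2, ← S1, e1, hLcount, hcardL']
  rw [mul_comm (t' + 1)] at key
  exact Nat.eq_of_mul_eq_mul_right (by omega) key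
end

section
/- Let q ≥ 2 and let S = (P, L, I) be a finite generalized hexagon of order (q,q) such that for every pair of lines ℓ₁, ℓ₂ at distance 6 in the incidence graph of S there is a unique subhexagon of S of order (q,1) containing both ℓ₁ and ℓ₂. Then the total number of subhexagons of S of order (q,1) is q³(1+q)(q² − q + 1)/2. -/
open SimpleGraph
section AuxCounting
open SimpleGraph Walk Finset

variable {V : Type*} {G : SimpleGraph V}

private lemma edge_singleton_aux {u v : V} (p : G.Walk u v) (hp : p.IsPath)
    (he : s(u, v) ∈ p.edges) : p.length = 1 := by
  cases p with
  | nil => simp at he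
  | @cons _ a _ h p' =>
    rw [Walk.edges_cons, List.mem_cons] at he
    rcases he with he | he
    · rw [Sym2.eq_iff] at he
      rcases he with ⟨-, rfl⟩ | ⟨rfl, rfl⟩
      · have : p' = Walk.nil := Walk.isPath_iff_eq_nil.mp (hp.of_cons)
        subst this; simp
      · exact absurd rfl h.ne
    · exact absurd (Walk.fst_mem_support_of_mem_edges _ he)
        ((Walk.cons_isPath_iff _ _).mp hp).2

private lemma path_length_one_eq {u v : V} (p q : G.Walk u v)
    (hp : p.length = 1) (hq : q.length = 1) : p = q := by
  cases p with
  | nil => simp at hp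
  | cons h p' =>
    cases p' with
    | nil =>
      cases q with
      | nil => simp at hq
      | cons h' q' =>
        cases q' with
        | nil => rfl
        | cons h'' q'' => simp [Walk.length_cons] at hq
    | cons h2 p'' => simp [Walk.length_cons] at hp

private lemma two_paths_cycle : ∀ (n : ℕ) {u v : V} (p q : G.Walk u v),
    p.IsPath → q.IsPath → p ≠ q → p.length + q.length ≤ n →
    ∃ (w : V) (c : G.Walk w w), c.IsCycle ∧ c.length ≤ n := by
  intro n
  induction n using Nat.strong_induction_on with
  | _ n ih =>
  intro u v p q hp hq hne hlen
  classical
  by_cases huv : u = v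
  · subst huv
    rw [Walk.isPath_iff_eq_nil.mp hp, Walk.isPath_iff_eq_nil.mp hq] at hne
    exact absurd rfl hne
  by_cases hx : ∃ x, x ∈ p.support ∧ x ∈ q.support ∧ x ≠ u ∧ x ≠ v
  · obtain ⟨x, hxp, hxq, hxu, hxv⟩ := hx
    set p₁ := p.takeUntil x hxp with hp₁
    set p₂ := p.dropUntil x hxp with hp₂
    set q₁ := q.takeUntil x hxq with hq₁
    set q₂ := q.dropUntil x hxq with hq₂
    have hpspec : p₁.append p₂ = p := p.take_spec hxp
    have hqspec : q₁.append q₂ = q := q.take_spec hxq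
    have hplen : p₁.length + p₂.length = p.length := by
      rw [← hpspec, Walk.length_append]
    have hqlen : q₁.length + q₂.length = q.length := by
      rw [← hqspec, Walk.length_append]
    have hp₁path : p₁.IsPath := hp.takeUntil _
    have hp₂path : p₂.IsPath := hp.dropUntil _
    have hq₁path : q₁.IsPath := hq.takeUntil _
    have hq₂path : q₂.IsPath := hq.dropUntil _
    have hp₁pos : 1 ≤ p₁.length := by
      rcases Nat.eq_zero_or_pos p₁.length with h | h
      · exact absurd (Walk.eq_of_length_eq_zero h) (Ne.symm hxu)
      · exact h
    have hp₂pos : 1 ≤ p₂.length := by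
      rcases Nat.eq_zero_or_pos p₂.length with h | h
      · exact absurd (Walk.eq_of_length_eq_zero h) hxv
      · exact h
    have hq₁pos : 1 ≤ q₁.length := by
      rcases Nat.eq_zero_or_pos q₁.length with h | h
      · exact absurd (Walk.eq_of_length_eq_zero h) (Ne.symm hxu)
      · exact h
    have hq₂pos : 1 ≤ q₂.length := by
      rcases Nat.eq_zero_or_pos q₂.length with h | h
      · exact absurd (Walk.eq_of_length_eq_zero h) hxv
      · exact h
    by_cases h1 : p₁ = q₁
    · have h2 : p₂ ≠ q₂ := by
        intro h2; apply hne; rw [← hpspec, ← hqspec, h1, h2]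
      obtain ⟨w, c, hc, hcl⟩ := ih (p₂.length + q₂.length)
        (by omega) p₂ q₂ hp₂path hq₂path h2 le_rfl
      exact ⟨w, c, hc, by omega⟩
    · obtain ⟨w, c, hc, hcl⟩ := ih (p₁.length + q₁.length)
        (by omega) p₁ q₁ hp₁path hq₁path h1 le_rfl
      exact ⟨w, c, hc, by omega⟩
  · push_neg at hx
    replace hx : ∀ x, x ∈ p.support → x ∈ q.support → x = u ∨ x = v := fun x h1 h2 => by
      by_cases h : x = u
      · exact Or.inl h
      · exact Or.inr (hx x h1 h2 h)
    -- p and q are internally disjoint; p.append q.reverse is a cycle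
    refine ⟨u, p.append q.reverse, ?_, ?_⟩
    · rw [Walk.isCycle_def]
      refine ⟨⟨?_⟩, ?_, ?_⟩
      · -- edges nodup
        rw [Walk.edges_append, List.nodup_append]
        refine ⟨hp.isTrail.edges_nodup, (hq.reverse).isTrail.edges_nodup, ?_⟩
        intro e he1 e' he2 hee; subst hee
        rw [Walk.edges_reverse, List.mem_reverse] at he2
        exfalso
        induction e with
        | h a b =>
          have hab : a ≠ b := (Walk.adj_of_mem_edges p he1).ne
          have hap : a ∈ p.support := Walk.fst_mem_support_of_mem_edges _ he1
          have hbp : b ∈ p.support := Walk.snd_mem_support_of_mem_edges _ he1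
          have haq : a ∈ q.support := Walk.fst_mem_support_of_mem_edges _ he2
          have hbq : b ∈ q.support := Walk.snd_mem_support_of_mem_edges _ he2
          have ha := hx a hap haq
          have hb := hx b hbp hbq
          have heuv : s(a, b) = s(u, v) := by
            rcases ha with rfl | rfl <;> rcases hb with rfl | rfl
            · exact absurd rfl hab
            · rfl
            · exact Sym2.eq_swap
            · exact absurd rfl hab
          rw [heuv] at he1 he2
          have haa := edge_singleton_aux p hp he1
          have h2 := edge_singleton_aux q hq he2
          apply hne
          exact path_length_one_eq p q haa h2
      · -- not nil
        intro h
        have : (p.append q.reverse).length = 0 := by rw [h]; rfl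
        rw [Walk.length_append] at this
        exact huv (Walk.eq_of_length_eq_zero (by omega : p.length = 0))
      · -- support tail nodup
        rw [Walk.support_append]
        rw [p.support_eq_cons]
        simp only [List.cons_append, List.tail_cons]
        rw [List.nodup_append]
        refine ⟨List.Nodup.sublist (List.tail_sublist _) hp.support_nodup,
          List.Nodup.sublist (List.tail_sublist _) hq.reverse.support_nodup, ?_⟩
        intro x hx1 y hx2 hxy; subst hxy
        have hxp : x ∈ p.support := List.mem_of_mem_tail hx1
        have hxq : x ∈ q.support := by
          have := List.mem_of_mem_tail hx2
          rwa [Walk.support_reverse, List.mem_reverse] at this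
        rcases hx x hxp hxq with rfl | rfl
        · have := p.support_eq_cons ▸ hp.support_nodup
          rw [List.nodup_cons] at this
          exact this.1 hx1
        · have := q.reverse.support_eq_cons ▸ hq.reverse.support_nodup
          rw [List.nodup_cons] at this
          exact this.1 hx2
    · rw [Walk.length_append, Walk.length_reverse]; omega

private lemma no_two_short_paths (hg : (12 : ℕ∞) ≤ G.egirth) {u v : V}
    (p q : G.Walk u v) (hp : p.IsPath) (hq : q.IsPath)
    (hlen : p.length + q.length < 12) : p = q := by
  by_contra hne
  obtain ⟨w, c, hc, hcl⟩ : ∃ (w : V) (c : G.Walk w w), c.IsCycle ∧ c.length ≤ p.length + q.length :=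
    two_paths_cycle (p.length + q.length) p q hp hq hne le_rfl
  have h12 : (12 : ℕ∞) ≤ c.length := (le_egirth.mp hg) w c hc
  have : (12 : ℕ) ≤ c.length := by exact_mod_cast h12
  omega

/-- parity of walks with respect to a 2-coloring -/
private lemma walk_parity (f : V → Bool) (hf : ∀ {a b : V}, G.Adj a b → f a = !f b) :
    ∀ {u v : V} (p : G.Walk u v), (f u = f v ↔ Even p.length) := by
  intro u v p
  induction p with
  | nil => simp
  | @cons a b c h p ih =>
    rw [Walk.length_cons, Nat.even_add_one, ← ih]
    have := hf h
    constructor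
    · intro h1 h2
      rw [h1, h2] at this
      exact (Bool.not_ne_self _ this.symm).elim
    · intro h1
      cases hfc : f c
      · cases hfb : f b
        · exact absurd (hfb.trans hfc.symm) h1
        · rw [this, hfb]; rfl
      · cases hfb : f b
        · rw [this, hfb]; rfl
        · exact absurd (hfb.trans hfc.symm) h1

private lemma dist_parity (f : V → Bool) (hf : ∀ {a b : V}, G.Adj a b → f a = !f b)
    {u v : V} (hr : G.Reachable u v) : (f u = f v ↔ Even (G.dist u v)) := by
  obtain ⟨p, hp, hl⟩ := hr.exists_path_of_dist
  rw [← hl]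
  exact walk_parity f hf p

private lemma double_count {α β : Type*} [Fintype α] [Fintype β]
    (A : Finset α) (B : Finset β) (r : α → β → Prop) [∀ a b, Decidable (r a b)] {da db : ℕ}
    (hA : ∀ a ∈ A, (B.filter (fun b => r a b)).card = da)
    (hB : ∀ b ∈ B, (A.filter (fun a => r a b)).card = db) :
    A.card * da = B.card * db := by
  have key : ∀ (m : ℕ), m = m := fun m => rfl
  calc A.card * da = ∑ _a ∈ A, da := by rw [Finset.sum_const, smul_eq_mul]
    _ = ∑ a ∈ A, (B.filter (fun b => r a b)).card := by
        exact (Finset.sum_congr rfl hA).symm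
    _ = ∑ a ∈ A, ∑ b ∈ B, if r a b then 1 else 0 := by
        refine Finset.sum_congr rfl fun a _ => ?_
        rw [Finset.card_filter]
    _ = ∑ b ∈ B, ∑ a ∈ A, if r a b then 1 else 0 := Finset.sum_comm
    _ = ∑ b ∈ B, (A.filter (fun a => r a b)).card := by
        refine Finset.sum_congr rfl fun b _ => ?_
        rw [Finset.card_filter]
    _ = ∑ _b ∈ B, db := Finset.sum_congr rfl hB
    _ = B.card * db := by rw [Finset.sum_const, smul_eq_mul]

private lemma filter_card_one {α : Type*} [Fintype α] {Pd : α → Prop} [DecidablePred Pd]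
    (h : ∃! x, Pd x) : (Finset.univ.filter Pd).card = 1 := by
  obtain ⟨x, hx, hu⟩ := h
  rw [Finset.card_eq_one]
  exact ⟨x, by ext y; simp only [Finset.mem_filter, Finset.mem_univ, true_and,
    Finset.mem_singleton]; exact ⟨fun hy => hu y hy, fun hy => hy ▸ hx⟩⟩

private lemma dist_le_of_mem_support [DecidableEq V] {v x u : V} {p : G.Walk v x}
    (hu : u ∈ p.support) : G.dist v u ≤ p.length :=
  le_trans (SimpleGraph.dist_le (p.takeUntil u hu)) (Walk.length_takeUntil_le p hu)

private lemma unique_pred (hconn : G.Connected) (hg : (12 : ℕ∞) ≤ G.egirth)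
    (v u : V) (k : ℕ) (hk1 : 1 ≤ k) (hk5 : k ≤ 5) (hd : G.dist v u = k) :
    ∃! w, G.Adj u w ∧ G.dist v w = k - 1 := by
  classical
  have huv : u ≠ v := by
    intro hh; subst hh; rw [SimpleGraph.dist_self] at hd; omega
  obtain ⟨p, hp, hl⟩ := hconn.exists_path_of_dist v u
  -- existence
  have hex : ∃ w, G.Adj u w ∧ G.dist v w = k - 1 := by
    have hq : p.reverse.IsPath := hp.reverse
    have hql : p.reverse.length = k := by rw [Walk.length_reverse, hl, hd]
    cases hrev : p.reverse with
    | nil =>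
      exact absurd (congrArg Walk.length hrev) (by rw [hql]; simp; omega)
    | @cons _ w _ ha r =>
      refine ⟨w, ha, le_antisymm ?_ ?_⟩
      · have : G.dist w v ≤ r.length := SimpleGraph.dist_le r
        have hrl : r.length = k - 1 := by
          have := hql; rw [hrev] at this; simp [Walk.length_cons] at this; omega
        rw [SimpleGraph.dist_comm]
        omega
      · have h1 : G.dist v u ≤ G.dist v w + G.dist w u := hconn.dist_triangle
        have h2 : G.dist w u = 1 := SimpleGraph.dist_eq_one_iff_adj.mpr ha.symm
        omega
  obtain ⟨w, hw⟩ := hex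
  refine ⟨w, hw, fun w' hw' => ?_⟩
  -- uniqueness
  by_contra hne
  obtain ⟨p1, hp1, hl1⟩ := hconn.exists_path_of_dist v w'
  obtain ⟨p2, hp2, hl2⟩ := hconn.exists_path_of_dist v w
  have hu1 : u ∉ p1.support := by
    intro hmem
    have := dist_le_of_mem_support (G := G) hmem
    rw [hl1, hw'.2] at this; omega
  have hu2 : u ∉ p2.support := by
    intro hmem
    have := dist_le_of_mem_support (G := G) hmem
    rw [hl2, hw.2] at this; omega
  have hP1 : (Walk.cons hw'.1 p1.reverse).IsPath := by
    rw [Walk.cons_isPath_iff]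
    exact ⟨hp1.reverse, by rwa [Walk.support_reverse, List.mem_reverse]⟩
  have hP2 : (Walk.cons hw.1 p2.reverse).IsPath := by
    rw [Walk.cons_isPath_iff]
    exact ⟨hp2.reverse, by rwa [Walk.support_reverse, List.mem_reverse]⟩
  have hlen : (Walk.cons hw'.1 p1.reverse).length + (Walk.cons hw.1 p2.reverse).length < 12 := by
    rw [Walk.length_cons, Walk.length_cons, Walk.length_reverse, Walk.length_reverse,
      hl1, hl2, hw.2, hw'.2]
    omega
  have := no_two_short_paths hg _ _ hP1 hP2 hlen
  apply hne
  have h1 : (Walk.cons hw'.1 p1.reverse).getVert 1 = w' := by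
    rw [Walk.getVert_cons_succ, Walk.getVert_zero]
  have h2 : (Walk.cons hw.1 p2.reverse).getVert 1 = w := by
    rw [Walk.getVert_cons_succ, Walk.getVert_zero]
  rw [← h1, ← h2, this]

private lemma neighbor_level (hconn : G.Connected) (f : V → Bool)
    (hf : ∀ {a b : V}, G.Adj a b → f a = !f b) {v u w : V} {k : ℕ}
    (hd : G.dist v u = k) (ha : G.Adj u w) :
    G.dist v w = k - 1 ∨ G.dist v w = k + 1 := by
  have t1 : G.dist v w ≤ G.dist v u + G.dist u w := hconn.dist_triangle
  have t2 : G.dist v u ≤ G.dist v w + G.dist w u := hconn.dist_triangle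
  have h1 : G.dist u w = 1 := SimpleGraph.dist_eq_one_iff_adj.mpr ha
  have h2 : G.dist w u = 1 := SimpleGraph.dist_eq_one_iff_adj.mpr ha.symm
  have hne : G.dist v w ≠ k := by
    intro hh
    have e1 : f v = f u ↔ Even (G.dist v u) := dist_parity f hf (hconn v u)
    have e2 : f v = f w ↔ Even (G.dist v w) := dist_parity f hf (hconn v w)
    have e3 : f u = !f w := hf ha
    rw [hd] at e1; rw [hh] at e2
    rw [← e1] at e2
    cases hv : f v <;> cases hu : f u <;> cases hw : f w <;> simp_all
  omega

private lemma ncard_eq_filter_card {α : Type*} [Fintype α] (s0 : Set α)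
    [DecidablePred (· ∈ s0)] :
    s0.ncard = (Finset.univ.filter (· ∈ s0)).card := by
  rw [Set.ncard_eq_toFinset_card']
  congr 1
  ext x
  simp

section Basics
variable {P L : Type*} {I : P → L → Prop}
private lemma inc_flip : ∀ {a b : P ⊕ L}, (incidenceGraph I).Adj a b →
    a.isLeft = !b.isLeft := by
  rintro (p | l) (p' | l') h
  · exact absurd h (by simp [incidenceGraph, IncAdj])
  · rfl
  · rfl
  · exact absurd h (by simp [incidenceGraph, IncAdj])
private lemma adj_inr_iff {l : L} {w : P ⊕ L} :
    (incidenceGraph I).Adj (Sum.inr l) w ↔ ∃ p, w = Sum.inl p ∧ I p l := by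
  cases w with
  | inl p => simp [incidenceGraph, IncAdj]
  | inr l' => simpa [incidenceGraph, IncAdj] using fun h => h.elim
private lemma adj_inl_iff {p : P} {w : P ⊕ L} :
    (incidenceGraph I).Adj (Sum.inl p) w ↔ ∃ l, w = Sum.inr l ∧ I p l := by
  cases w with
  | inl p' => simpa [incidenceGraph, IncAdj] using fun h => h.elim
  | inr l => simp [incidenceGraph, IncAdj]
end Basics

theorem hex_counts {P L : Type*} [Fintype P] [Fintype L] {I : P → L → Prop} {s t : ℕ}
    (h : IsGenPolygon I 6 s t) :
    (∀ l : L, {l' : L | (incidenceGraph I).dist (Sum.inr l) (Sum.inr l') = 6}.ncard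
      = s * s * (t * t * t)) ∧
    Fintype.card L = 1 + (s + 1) * t + (s + 1) * t * (s * t) + s * s * (t * t * t) := by
  classical
  set G := incidenceGraph I with hGdef
  have hne : Nonempty (P ⊕ L) := ⟨Sum.inl h.pts_nonempty.some⟩
  have hedist : ∀ u v, G.edist u v ≤ 6 := fun u v => by
    calc G.edist u v ≤ G.ediam := edist_le_ediam
      _ = ((6 : ℕ) : ℕ∞) := h.ediam_eq
      _ ≤ 6 := by norm_num
  have hreach : ∀ u v, G.Reachable u v := fun u v =>
    reachable_of_edist_ne_top (by intro hh; have := hedist u v; rw [hh] at this; simp at this)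
  have hconn : G.Connected := ⟨hreach⟩
  have hdist6 : ∀ u v, G.dist u v ≤ 6 := fun u v => by
    have h1 := hedist u v
    have : (G.edist u v).toNat ≤ ((6 : ℕ∞)).toNat := ENat.toNat_le_toNat h1 (by norm_num)
    simpa [SimpleGraph.dist] using this
  have hgirth : (12 : ℕ∞) ≤ G.egirth := by
    rw [h.egirth_eq]; norm_num
  have hf : ∀ {a b : P ⊕ L}, G.Adj a b → Sum.isLeft a = !Sum.isLeft b := inc_flip
  -- degrees
  have hdegL : ∀ l : L, (univ.filter (fun w => G.Adj (Sum.inr l) w)).card = s + 1 := by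
    intro l
    have himg : univ.filter (fun w => G.Adj (Sum.inr l) w)
        = (univ.filter (fun p : P => I p l)).image Sum.inl := by
      ext w
      simp only [mem_filter, mem_univ, true_and, mem_image]
      rw [adj_inr_iff]
      constructor
      · rintro ⟨p, rfl, hp⟩; exact ⟨p, hp, rfl⟩
      · rintro ⟨p, hp, rfl⟩; exact ⟨p, rfl, hp⟩
    rw [himg, Finset.card_image_of_injective _ Sum.inl_injective]
    have hnc := h.line_card l
    rw [ncard_eq_filter_card] at hnc
    rw [← hnc]
    congr 1
  have hdegP : ∀ p : P, (univ.filter (fun w => G.Adj (Sum.inl p) w)).card = t + 1 := by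
    intro p
    have himg : univ.filter (fun w => G.Adj (Sum.inl p) w)
        = (univ.filter (fun l : L => I p l)).image Sum.inr := by
      ext w
      simp only [mem_filter, mem_univ, true_and, mem_image]
      rw [adj_inl_iff]
      constructor
      · rintro ⟨l, rfl, hl⟩; exact ⟨l, hl, rfl⟩
      · rintro ⟨l, hl, rfl⟩; exact ⟨l, rfl, hl⟩
    rw [himg, Finset.card_image_of_injective _ Sum.inr_injective]
    have hnc := h.point_card p
    rw [ncard_eq_filter_card] at hnc
    rw [← hnc]
    congr 1
  -- main per-line analysis
  have main : ∀ l : L,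
      (univ.filter (fun w : P ⊕ L => G.dist (Sum.inr l) w = 6)).card = s * s * (t * t * t) ∧
      Fintype.card L = 1 + (s + 1) * t + (s + 1) * t * (s * t) + s * s * (t * t * t) := by
    intro l
    set v := (Sum.inr l : P ⊕ L) with hv
    set Sk : ℕ → Finset (P ⊕ L) := fun k => univ.filter (fun w => G.dist v w = k) with hSk
    have hmemSk : ∀ k w, w ∈ Sk k ↔ G.dist v w = k := by
      intro k w; simp [hSk]
    have hside : ∀ (k : ℕ) (w), G.dist v w = k → (Even k ↔ Sum.isRight w) := by
      intro k w hk
      have hp := dist_parity (Sum.isLeft) hf (hreach v w)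
      rw [hk] at hp
      rw [← hp, hv]
      cases w <;> simp
    have hdeg : ∀ (k : ℕ) (u), G.dist v u = k →
        (univ.filter (fun w => G.Adj u w)).card = if Even k then s + 1 else t + 1 := by
      intro k u hk
      by_cases he : Even k
      · obtain ⟨l', rfl⟩ := Sum.isRight_iff.mp ((hside k u hk).mp he)
        rw [if_pos he]; exact hdegL l'
      · have hnr : ¬ Sum.isRight u := fun hr => he ((hside k u hk).mpr hr)
        cases u with
        | inl p' => rw [if_neg he]; exact hdegP p'
        | inr l' => exact absurd rfl hnr
    have hpredc : ∀ (k : ℕ), 1 ≤ k → k ≤ 5 → ∀ u, G.dist v u = k →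
        ((Sk (k-1)).filter (fun w => G.Adj u w)).card = 1 := by
      intro k hk1 hk5 u hd
      have hEU := unique_pred hconn hgirth v u k hk1 hk5 hd
      have hset : (Sk (k-1)).filter (fun w => G.Adj u w)
          = univ.filter (fun w => G.Adj u w ∧ G.dist v w = k - 1) := by
        ext w; simp only [mem_filter, mem_univ, true_and, hSk]; tauto
      rw [hset]
      exact filter_card_one hEU
    have hup : ∀ (k : ℕ), 1 ≤ k → k ≤ 5 → ∀ u, G.dist v u = k →
        ((Sk (k+1)).filter (fun w => G.Adj u w)).card
          = (if Even k then s + 1 else t + 1) - 1 := by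
      intro k hk1 hk5 u hd
      have hsplit := Finset.card_filter_add_card_filter_not
        (s := univ.filter (fun w => G.Adj u w)) (p := fun w => G.dist v w = k - 1)
      have h1 : (univ.filter (fun w => G.Adj u w)).filter (fun w => G.dist v w = k - 1)
          = (Sk (k-1)).filter (fun w => G.Adj u w) := by
        ext w; simp only [mem_filter, mem_univ, true_and, hSk]; tauto
      have h2 : (univ.filter (fun w => G.Adj u w)).filter (fun w => ¬ G.dist v w = k - 1)
          = (Sk (k+1)).filter (fun w => G.Adj u w) := by
        ext w
        simp only [mem_filter, mem_univ, true_and, hSk]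
        constructor
        · rintro ⟨ha, hne⟩
          rcases neighbor_level hconn Sum.isLeft hf hd ha with hh | hh
          · exact absurd hh hne
          · exact ⟨hh, ha⟩
        · rintro ⟨hw, ha⟩
          exact ⟨ha, by rw [hw]; omega⟩
      rw [h1, h2, hpredc k hk1 hk5 u hd, hdeg k u hd] at hsplit
      by_cases he : Even k <;> simp [he] at hsplit ⊢ <;> omega
    have hlast : ∀ w, G.dist v w = 6 →
        ((Sk 5).filter (fun u' => G.Adj u' w)).card = s + 1 := by
      intro w hd
      have hset : (Sk 5).filter (fun u' => G.Adj u' w)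
          = univ.filter (fun u' => G.Adj w u') := by
        ext u'
        simp only [mem_filter, mem_univ, true_and, hSk]
        constructor
        · rintro ⟨hd5, ha⟩; exact ha.symm
        · intro ha
          rcases neighbor_level hconn Sum.isLeft hf hd ha with hh | hh
          · exact ⟨by simpa using hh, ha.symm⟩
          · have := hdist6 v u'; omega
      rw [hset]
      simpa [show Even 6 from ⟨3, rfl⟩] using hdeg 6 w hd
    -- sphere cards
    have c0 : (Sk 0).card = 1 := by
      have : Sk 0 = {v} := by
        ext w
        simp only [hSk, mem_filter, mem_univ, true_and, mem_singleton]
        rw [hconn.dist_eq_zero_iff]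
        exact comm
      rw [this, card_singleton]
    have c1 : (Sk 1).card = s + 1 := by
      have : Sk 1 = univ.filter (fun w => G.Adj v w) := by
        ext w
        simp only [hSk, mem_filter, mem_univ, true_and]
        rw [SimpleGraph.dist_eq_one_iff_adj]
      rw [this, hv]
      exact hdegL l
    have step : ∀ k : ℕ, 1 ≤ k → k ≤ 4 →
        (Sk (k+1)).card = (Sk k).card * ((if Even k then s + 1 else t + 1) - 1) := by
      intro k hk1 hk4
      have hdc := double_count (Sk k) (Sk (k+1)) (fun u w => G.Adj u w)
        (da := (if Even k then s + 1 else t + 1) - 1) (db := 1)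
        (fun u hu => hup k hk1 (by omega) u ((hmemSk k u).mp hu))
        (fun w hw => by
          have hd : G.dist v w = k + 1 := (hmemSk (k+1) w).mp hw
          have := hpredc (k+1) (by omega) (by omega) w hd
          have hset : (Sk ((k+1)-1)).filter (fun w' => G.Adj w w')
              = (Sk k).filter (fun a => G.Adj a w) := by
            ext a
            simp only [mem_filter, hSk, mem_univ, true_and]
            rw [show k + 1 - 1 = k from rfl]
            constructor
            · rintro ⟨h1, h2⟩; exact ⟨h1, h2.symm⟩
            · rintro ⟨h1, h2⟩; exact ⟨h1, h2.symm⟩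
          rw [hset] at this
          exact this)
      omega
    have last : (Sk 5).card * t = (Sk 6).card * (s + 1) := by
      have hdc := double_count (Sk 5) (Sk 6) (fun u w => G.Adj u w)
        (da := t) (db := s + 1)
        (fun u hu => by
          have := hup 5 (by omega) (by omega) u ((hmemSk 5 u).mp hu)
          simpa [Nat.even_iff] using this)
        (fun w hw => hlast w ((hmemSk 6 w).mp hw))
      exact hdc
    have c2 : (Sk 2).card = (s+1) * t := by
      rw [step 1 (by omega) (by omega), c1]
      norm_num [Nat.even_iff]
    have c3 : (Sk 3).card = (s+1) * t * s := by
      rw [step 2 (by omega) (by omega), c2]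
      norm_num [Nat.even_iff]
    have c4 : (Sk 4).card = (s+1) * t * (s * t) := by
      rw [step 3 (by omega) (by omega), c3]
      norm_num [Nat.even_iff]
      ring
    have c5 : (Sk 5).card = (s+1) * t * (s * t) * s := by
      rw [step 4 (by omega) (by omega), c4]
      norm_num [Nat.even_iff]
    have c6 : (Sk 6).card = s * s * (t * t * t) := by
      have h1 : (Sk 6).card * (s + 1) = (s * s * (t * t * t)) * (s + 1) := by
        rw [← last, c5]; ring
      exact Nat.eq_of_mul_eq_mul_right (Nat.succ_pos s) h1
    constructor
    · exact c6
    · -- total count of lines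
      set R : Finset (P ⊕ L) := univ.filter (fun w => Sum.isRight w) with hR
      have hcardR : R.card = Fintype.card L := by
        have : R = (univ : Finset L).image Sum.inr := by
          ext w
          simp only [hR, mem_filter, mem_univ, true_and, mem_image]
          cases w <;> simp
        rw [this, Finset.card_image_of_injective _ Sum.inr_injective, card_univ]
      have hmaps : ∀ w ∈ R, G.dist v w ∈ ({0, 2, 4, 6} : Finset ℕ) := by
        intro w hw
        have hr : Sum.isRight w := by simpa [hR] using hw
        have he : Even (G.dist v w) := (hside _ w rfl).mpr hr
        have hle := hdist6 v w
        obtain ⟨m, hm⟩ := he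
        simp only [Finset.mem_insert, Finset.mem_singleton]
        omega
      have htotal := Finset.card_eq_sum_card_fiberwise hmaps
      have hfib : ∀ k : ℕ, Even k → R.filter (fun w => G.dist v w = k) = Sk k := by
        intro k hk
        ext w
        simp only [hR, mem_filter, mem_univ, true_and, hSk]
        constructor
        · rintro ⟨-, hd⟩; exact hd
        · intro hd; exact ⟨(hside k w hd).mp hk, hd⟩
      rw [show ({0, 2, 4, 6} : Finset ℕ) = insert 0 (insert 2 (insert 4 {6})) from rfl] at htotal
      rw [Finset.sum_insert (by decide), Finset.sum_insert (by decide),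
        Finset.sum_insert (by decide), Finset.sum_singleton] at htotal
      rw [hfib 0 (by decide), hfib 2 (by decide), hfib 4 (by decide), hfib 6 (by decide)]
        at htotal
      rw [← hcardR, htotal, c0, c2, c4, c6]
      ring
  constructor
  · intro l
    have := (main l).1
    rw [ncard_eq_filter_card]
    rw [← this]
    have himg : (univ.filter (fun w : P ⊕ L => G.dist (Sum.inr l) w = 6))
        = (univ.filter
            (· ∈ {l' : L | (incidenceGraph I).dist (Sum.inr l) (Sum.inr l') = 6})).image
            Sum.inr := by
      ext w
      simp only [mem_filter, mem_univ, true_and, mem_image, Set.mem_setOf_eq]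
      constructor
      · intro hd
        have hr : Sum.isRight w := by
          have hp := dist_parity (Sum.isLeft) hf (hreach (Sum.inr l) w)
          rw [hd] at hp
          have : Sum.isLeft (Sum.inr l : P ⊕ L) = Sum.isLeft w := by
            rw [hp]; decide
          cases w <;> simp_all
        obtain ⟨l', rfl⟩ := Sum.isRight_iff.mp hr
        exact ⟨l', hd, rfl⟩
      · rintro ⟨l', hd, rfl⟩
        exact hd
    rw [himg, Finset.card_image_of_injective _ Sum.inr_injective]
  · obtain ⟨p0⟩ := h.pts_nonempty
    have ht : {l : L | I p0 l}.ncard = t + 1 := h.point_card p0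
    have hLne : Nonempty L := by
      by_contra hno
      rw [not_nonempty_iff] at hno
      have h0 : {l : L | I p0 l}.ncard = 0 := by
        have hemp : {l : L | I p0 l} = ∅ := Set.eq_empty_of_isEmpty _
        rw [hemp, Set.ncard_empty]
      omega
    obtain ⟨l0⟩ := hLne
    exact (main l0).2

private lemma gp_conn {P L : Type*} {I : P → L → Prop} {s t : ℕ}
    (h : IsGenPolygon I 6 s t) :
    (incidenceGraph I).Connected ∧ (∀ u v, (incidenceGraph I).dist u v ≤ 6) ∧
      (12 : ℕ∞) ≤ (incidenceGraph I).egirth := by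
  set G := incidenceGraph I
  have hne : Nonempty (P ⊕ L) := ⟨Sum.inl h.pts_nonempty.some⟩
  have hedist : ∀ u v, G.edist u v ≤ 6 := fun u v => by
    calc G.edist u v ≤ G.ediam := edist_le_ediam
      _ = ((6 : ℕ) : ℕ∞) := h.ediam_eq
      _ ≤ 6 := by norm_num
  have hreach : ∀ u v, G.Reachable u v := fun u v =>
    reachable_of_edist_ne_top (by intro hh; have := hedist u v; rw [hh] at this; simp at this)
  refine ⟨⟨hreach⟩, fun u v => ?_, by rw [h.egirth_eq]; norm_num⟩
  have h1 := hedist u v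
  have : (G.edist u v).toNat ≤ ((6 : ℕ∞)).toNat := ENat.toNat_le_toNat h1 (by norm_num)
  simpa [SimpleGraph.dist] using this

section Iso
variable {P L : Type*} {I : P → L → Prop} {P' : Set P} {L' : Set L}

private def subHom (I : P → L → Prop) (P' : Set P) (L' : Set L) :
    (incidenceGraph (fun (p : P') (l : L') => I p.1 l.1)) →g (incidenceGraph I) where
  toFun := Sum.map Subtype.val Subtype.val
  map_rel' := by
    rintro (p | l) (p' | l') h
    · exact absurd h (by simp [incidenceGraph, IncAdj])
    · exact h
    · exact h
    · exact absurd h (by simp [incidenceGraph, IncAdj])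

private lemma subHom_injective :
    Function.Injective (subHom I P' L').toFun := by
  rintro (a | a) (b | b) h <;>
    simp only [subHom, Sum.map_inl, Sum.map_inr, Sum.inl.injEq, Sum.inr.injEq] at h ⊢
  · exact Subtype.ext h
  · exact (Sum.inl_ne_inr h).elim
  · exact (Sum.inr_ne_inl h).elim
  · exact Subtype.ext h

private lemma subHom_inr (l : L') :
    (subHom I P' L') (Sum.inr l) = Sum.inr l.1 := rfl

private lemma sub_dist_six {q : ℕ}
    (hhex : IsGenPolygon I 6 q q)
    (hsub : IsGenPolygon (fun (p : P') (l : L') => I p.1 l.1) 6 q 1)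
    (l1 l2 : L') :
    (incidenceGraph I).dist (Sum.inr l1.1) (Sum.inr l2.1) = 6 ↔
    (incidenceGraph (fun (p : P') (l : L') => I p.1 l.1)).dist
      (Sum.inr l1) (Sum.inr l2) = 6 := by
  classical
  obtain ⟨hconn, hdist6, hgirth⟩ := gp_conn hhex
  obtain ⟨hconn', hdist6', hgirth'⟩ := gp_conn hsub
  have hmapdist : (incidenceGraph I).dist (Sum.inr l1.1) (Sum.inr l2.1) ≤
      (incidenceGraph (fun (p : P') (l : L') => I p.1 l.1)).dist
        (Sum.inr l1) (Sum.inr l2) := by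
    obtain ⟨p, hp, hl⟩ := (hconn' (Sum.inr l1) (Sum.inr l2)).exists_path_of_dist
    have hd := SimpleGraph.dist_le ((p.map (subHom I P' L')).copy
      (subHom_inr l1) (subHom_inr l2))
    rwa [Walk.length_copy, Walk.length_map, hl] at hd
  constructor
  · intro hS
    have h2 := hdist6' (Sum.inr l1) (Sum.inr l2)
    omega
  · intro hS'
    by_contra hne
    have hlt : (incidenceGraph I).dist (Sum.inr l1.1) (Sum.inr l2.1) < 6 := by
      have := hdist6 (Sum.inr l1.1) (Sum.inr l2.1)
      omega
    obtain ⟨pS, hpS, hlS⟩ := (hconn (Sum.inr l1.1) (Sum.inr l2.1)).exists_path_of_dist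
    obtain ⟨p', hp', hl'⟩ := (hconn' (Sum.inr l1) (Sum.inr l2)).exists_path_of_dist
    have hpH : ((p'.map (subHom I P' L')).copy (subHom_inr l1) (subHom_inr l2)).IsPath := by
      rw [Walk.isPath_copy]
      exact Walk.map_isPath_of_injective subHom_injective hp'
    have hlenH : ((p'.map (subHom I P' L')).copy (subHom_inr l1) (subHom_inr l2)).length = 6 := by
      rw [Walk.length_copy, Walk.length_map, hl', hS']
    have heq := no_two_short_paths hgirth pS _ hpS hpH
      (by rw [hlenH, hlS]; omega)
    have h6 : pS.length = 6 := by rw [heq, hlenH]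
    rw [hlS] at h6
    omega

end Iso

private lemma filter_card_congr {α : Type*} [Fintype α] (p1 p2 : α → Prop)
    [DecidablePred p1] [DecidablePred p2] (h : ∀ a, p1 a ↔ p2 a) :
    (univ.filter p1).card = (univ.filter p2).card := by
  congr 1
  ext a
  simp only [mem_filter, mem_univ, true_and]
  exact h a

private lemma card_pairs {α β : Type*} [Fintype α] [Fintype β] (p : α → β → Prop)
    [∀ a b, Decidable (p a b)] {m : ℕ}
    (hp : ∀ a, (univ.filter (fun b => p a b)).card = m) :
    (univ.filter (fun e : α × β => p e.1 e.2)).card = Fintype.card α * m := by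
  rw [Finset.card_filter, Fintype.sum_prod_type]
  have key : ∀ a : α, (∑ b : β, if p a b then 1 else 0) = m := by
    intro a
    rw [← Finset.card_filter]
    exact hp a
  rw [Finset.sum_congr rfl (fun a _ => key a), Finset.sum_const, card_univ, smul_eq_mul]

private lemma final_arith {q N : ℕ} (hq : 2 ≤ q)
    (hkey : N * ((2 + 2 * q + 2 * q ^ 2) * q ^ 2)
      = (1 + q + q ^ 2 + q ^ 3 + q ^ 4 + q ^ 5) * q ^ 5) :
    N = q ^ 3 * (1 + q) * (q ^ 2 - q + 1) / 2 := by
  have hq2 : q ≤ q ^ 2 := Nat.le_self_pow two_ne_zero q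
  have key2 : (q ^ 2 - q + 1) * (1 + q + q ^ 2) = 1 + q ^ 2 + q ^ 4 := by
    zify [hq2]
    ring
  have heven : 2 ∣ q ^ 3 * (1 + q) * (q ^ 2 - q + 1) := by
    obtain ⟨m, hm⟩ := Nat.even_mul_succ_self q
    refine ⟨q ^ 2 * m * (q ^ 2 - q + 1), ?_⟩
    calc q ^ 3 * (1 + q) * (q ^ 2 - q + 1)
        = q ^ 2 * (q * (q + 1)) * (q ^ 2 - q + 1) := by ring_nf
      _ = q ^ 2 * (m + m) * (q ^ 2 - q + 1) := by rw [hm]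
      _ = 2 * (q ^ 2 * m * (q ^ 2 - q + 1)) := by ring
  have hT2 : q ^ 3 * (1 + q) * (q ^ 2 - q + 1) / 2 * 2
      = q ^ 3 * (1 + q) * (q ^ 2 - q + 1) := Nat.div_mul_cancel heven
  have hq0 : 0 < q := by omega
  have hKpos : 0 < (2 + 2 * q + 2 * q ^ 2) * q ^ 2 := by positivity
  apply Nat.eq_of_mul_eq_mul_right hKpos
  rw [hkey]
  symm
  calc q ^ 3 * (1 + q) * (q ^ 2 - q + 1) / 2 * ((2 + 2 * q + 2 * q ^ 2) * q ^ 2)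
      = (q ^ 3 * (1 + q) * (q ^ 2 - q + 1) / 2 * 2) * ((1 + q + q ^ 2) * q ^ 2) := by ring
    _ = q ^ 3 * (1 + q) * (q ^ 2 - q + 1) * ((1 + q + q ^ 2) * q ^ 2) := by rw [hT2]
    _ = ((q ^ 2 - q + 1) * (1 + q + q ^ 2)) * (q ^ 3 * (1 + q) * q ^ 2) := by ring
    _ = (1 + q ^ 2 + q ^ 4) * (q ^ 3 * (1 + q) * q ^ 2) := by rw [key2]
    _ = (1 + q + q ^ 2 + q ^ 3 + q ^ 4 + q ^ 5) * q ^ 5 := by ring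


end AuxCounting

open SimpleGraph Walk Finset in

/-- In a finite generalized hexagon of order `(q, q)` in which any two lines at distance 6
lie in a unique subhexagon of order `(q, 1)`, the total number of subhexagons of order
`(q, 1)` is `q³(1+q)(q²−q+1)/2`. -/
theorem card_subhexagons {P L : Type*} [Fintype P] [Fintype L]
    {I : P → L → Prop} {q : ℕ} (hq : 2 ≤ q) (hhex : IsGenPolygon I 6 q q)
    (hunique : ∀ l₁ l₂ : L,
      (incidenceGraph I).dist (Sum.inr l₁) (Sum.inr l₂) = 6 →
      ∃! x : Set P × Set L, IsSubhexagon I q 1 x.1 x.2 ∧ l₁ ∈ x.2 ∧ l₂ ∈ x.2) :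
    {x : Set P × Set L | IsSubhexagon I q 1 x.1 x.2}.ncard =
      q ^ 3 * (1 + q) * (q ^ 2 - q + 1) / 2 := by
  classical
  letI : Fintype (Set P × Set L) := Fintype.ofFinite _
  obtain ⟨hopp, hcardL⟩ := hex_counts hhex
  set D : Finset (L × L) := univ.filter
    (fun e : L × L => (incidenceGraph I).dist (Sum.inr e.1) (Sum.inr e.2) = 6) with hD
  have hcardD : D.card = Fintype.card L * (q * q * (q * q * q)) := by
    rw [hD]
    apply card_pairs (fun l1 l2 : L =>
      (incidenceGraph I).dist (Sum.inr l1) (Sum.inr l2) = 6)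
    intro l1
    have hn := hopp l1
    rw [ncard_eq_filter_card] at hn
    rw [← hn]
    exact filter_card_congr _ _ (fun l2 => by simp [Set.mem_setOf_eq])
  set HXf : Finset (Set P × Set L) :=
    univ.filter (fun x => IsSubhexagon I q 1 x.1 x.2) with hHXf
  set F : L × L → Set P × Set L := fun e =>
    if hd : (incidenceGraph I).dist (Sum.inr e.1) (Sum.inr e.2) = 6 then
      (hunique e.1 e.2 hd).choose else (∅, ∅) with hF
  have hFspec : ∀ (e : L × L)
      (hd : (incidenceGraph I).dist (Sum.inr e.1) (Sum.inr e.2) = 6),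
      (IsSubhexagon I q 1 (F e).1 (F e).2 ∧ e.1 ∈ (F e).2 ∧ e.2 ∈ (F e).2) ∧
        (∀ y : Set P × Set L, (IsSubhexagon I q 1 y.1 y.2 ∧ e.1 ∈ y.2 ∧ e.2 ∈ y.2) → y = F e) := by
    intro e hd
    have hc := (hunique e.1 e.2 hd).choose_spec
    rw [hF]
    simp only [dif_pos hd]
    exact hc
  have hFmem : ∀ e ∈ D, F e ∈ HXf := by
    intro e he
    have hd : (incidenceGraph I).dist (Sum.inr e.1) (Sum.inr e.2) = 6 := by
      simpa [hD] using he
    simp only [hHXf, mem_filter, mem_univ, true_and]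
    exact ((hFspec e hd).1).1
  have hsum := Finset.card_eq_sum_card_fiberwise hFmem
  -- fiber cardinality
  have hfiber : ∀ x ∈ HXf, (D.filter (fun e => F e = x)).card
      = (1 + (q + 1) * 1 + (q + 1) * 1 * (q * 1) + q * q * (1 * (1 * 1))) * (q * q * (1 * (1 * 1))) := by
    intro x hx
    have hxsub : IsSubhexagon I q 1 x.1 x.2 := by
      simpa [hHXf] using hx
    letI : Fintype ↥x.1 := Fintype.ofFinite _
    letI : Fintype ↥x.2 := Fintype.ofFinite _
    obtain ⟨hopp', hcardL'⟩ := hex_counts hxsub.2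
    have hmem : ∀ e ∈ D.filter (fun e => F e = x),
        (incidenceGraph I).dist (Sum.inr e.1) (Sum.inr e.2) = 6 ∧ e.1 ∈ x.2 ∧ e.2 ∈ x.2 := by
      intro e he
      rw [mem_filter] at he
      have hd : (incidenceGraph I).dist (Sum.inr e.1) (Sum.inr e.2) = 6 := by
        have := he.1; simpa [hD] using this
      have hs := (hFspec e hd).1
      rw [he.2] at hs
      exact ⟨hd, hs.2.1, hs.2.2⟩
    have hbij : (D.filter (fun e => F e = x)).card
        = ((univ : Finset (↥x.2 × ↥x.2)).filter
            (fun e => (incidenceGraph (fun (p : ↥x.1) (l : ↥x.2) => I p.1 l.1)).dist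
              (Sum.inr e.1) (Sum.inr e.2) = 6)).card := by
      refine Finset.card_bij'
        (fun e he => (⟨e.1, (hmem e he).2.1⟩, ⟨e.2, (hmem e he).2.2⟩))
        (fun f _ => (f.1.1, f.2.1)) ?_ ?_ ?_ ?_
      · intro e he
        simp only [mem_filter, mem_univ, true_and]
        exact (sub_dist_six hhex hxsub.2 _ _).mp (hmem e he).1
      · intro f hf
        have hd' : (incidenceGraph (fun (p : ↥x.1) (l : ↥x.2) => I p.1 l.1)).dist
            (Sum.inr f.1) (Sum.inr f.2) = 6 := by
          simpa using hf
        have hd : (incidenceGraph I).dist (Sum.inr f.1.1) (Sum.inr f.2.1) = 6 :=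
          (sub_dist_six hhex hxsub.2 _ _).mpr hd'
        rw [mem_filter]
        constructor
        · simp only [hD, mem_filter, mem_univ, true_and]
          exact hd
        · have := (hFspec (f.1.1, f.2.1) hd).2 x ⟨hxsub, f.1.2, f.2.2⟩
          exact this.symm
      · intro e he
        rfl
      · intro f hf
        rfl
    rw [hbij]
    have hpc := card_pairs
      (fun l1 l2 : ↥x.2 => (incidenceGraph (fun (p : ↥x.1) (l : ↥x.2) => I p.1 l.1)).dist
        (Sum.inr l1) (Sum.inr l2) = 6)
      (m := q * q * (1 * (1 * 1)))
      (fun l1 => by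
        have hn := hopp' l1
        rw [ncard_eq_filter_card] at hn
        rw [← hn]
        exact filter_card_congr _ _ (fun l2 => by simp [Set.mem_setOf_eq]))
    rw [hpc, hcardL']
  -- assemble
  have htotal : D.card = HXf.card *
      ((1 + (q + 1) * 1 + (q + 1) * 1 * (q * 1) + q * q * (1 * (1 * 1))) * (q * q * (1 * (1 * 1)))) := by
    rw [hsum, Finset.sum_congr rfl hfiber, Finset.sum_const, smul_eq_mul]
  have hgoal : {x : Set P × Set L | IsSubhexagon I q 1 x.1 x.2}.ncard = HXf.card := by
    rw [ncard_eq_filter_card, hHXf]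
    exact filter_card_congr _ _ (fun x => by simp [Set.mem_setOf_eq])
  rw [hgoal]
  apply final_arith hq
  have hkeyraw : HXf.card *
      ((1 + (q + 1) * 1 + (q + 1) * 1 * (q * 1) + q * q * (1 * (1 * 1))) * (q * q * (1 * (1 * 1))))
      = (1 + (q + 1) * q + (q + 1) * q * (q * q) + q * q * (q * q * q)) * (q * q * (q * q * q)) := by
    rw [← htotal, hcardD, hcardL]
  calc HXf.card * ((2 + 2 * q + 2 * q ^ 2) * q ^ 2)
      = HXf.card * ((1 + (q + 1) * 1 + (q + 1) * 1 * (q * 1) + q * q * (1 * (1 * 1)))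
          * (q * q * (1 * (1 * 1)))) := by ring
    _ = (1 + (q + 1) * q + (q + 1) * q * (q * q) + q * q * (q * q * q)) * (q * q * (q * q * q)) :=
        hkeyraw
    _ = (1 + q + q ^ 2 + q ^ 3 + q ^ 4 + q ^ 5) * q ^ 5 := by ring
end

section
/- Let q ≥ 2 and let S = (P, L, I) be a finite generalized hexagon of order (q,q) such that for every pair of lines ℓ₁, ℓ₂ at distance 6 in the incidence graph of S there is a unique subhexagon of S of order (q,1) containing both ℓ₁ and ℓ₂. Let O be a partial distance-2 ovoid of S such that no subhexagon of S of order (q,1) contains q² + q + 1 points of O. Then |O| ≤ (q² − q + 1)(q² + q). -/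
open SimpleGraph
namespace PartialOvoidAux
set_option linter.unusedSectionVars false

lemma egirth_le_of_two_paths {V : Type*} {G : SimpleGraph V} {u v : V} {p q : G.Walk u v}
    (hp : p.IsPath) (hq : q.IsPath) (hne : p ≠ q) :
    G.egirth ≤ (p.length + q.length : ℕ) := by
  classical
  set E : Set (Sym2 V) := {e | e ∈ p.edges ∨ e ∈ q.edges} with hE
  have hEsub : E ⊆ G.edgeSet := by
    rintro e (he | he)
    · exact p.edges_subset_edgeSet he
    · exact q.edges_subset_edgeSet he
  set G' := SimpleGraph.fromEdgeSet E with hG'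
  have hle : G' ≤ G := by
    intro a b hab
    rw [hG', SimpleGraph.fromEdgeSet_adj] at hab
    exact (G.mem_edgeSet).mp (hEsub hab.1)
  have hpE : ∀ e ∈ p.edges, e ∈ G'.edgeSet := by
    intro e he
    rw [hG', SimpleGraph.edgeSet_fromEdgeSet]
    exact ⟨Or.inl he, G.not_isDiag_of_mem_edgeSet (p.edges_subset_edgeSet he)⟩
  have hqE : ∀ e ∈ q.edges, e ∈ G'.edgeSet := by
    intro e he
    rw [hG', SimpleGraph.edgeSet_fromEdgeSet]
    exact ⟨Or.inr he, G.not_isDiag_of_mem_edgeSet (q.edges_subset_edgeSet he)⟩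
  have hp' : (p.transfer G' hpE).IsPath := hp.transfer _
  have hq' : (q.transfer G' hqE).IsPath := hq.transfer _
  have hne' : (p.transfer G' hpE) ≠ (q.transfer G' hqE) := by
    intro h
    apply hne
    have h2 := congrArg (fun w : SimpleGraph.Walk G' u v =>
      w.transfer G (fun e he => (SimpleGraph.edgeSet_mono hle) (w.edges_subset_edgeSet he))) h
    simp only [Walk.transfer_transfer] at h2
    rwa [Walk.transfer_self, Walk.transfer_self] at h2
  have hnac : ¬ G'.IsAcyclic := by
    intro hac
    exact hne' (congrArg Subtype.val
      (hac.path_unique ⟨p.transfer G' hpE, hp'⟩ ⟨q.transfer G' hqE, hq'⟩))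
  obtain ⟨a, c, hc, -⟩ := (SimpleGraph.exists_egirth_eq_length).2 hnac
  have hnodup : c.edges.Nodup := hc.edges_nodup
  have hsubs : c.edges.toFinset ⊆ p.edges.toFinset ∪ q.edges.toFinset := by
    intro e he
    rw [List.mem_toFinset] at he
    have := c.edges_subset_edgeSet he
    rw [hG', SimpleGraph.edgeSet_fromEdgeSet] at this
    rcases this.1 with h | h
    · exact Finset.mem_union_left _ (List.mem_toFinset.mpr h)
    · exact Finset.mem_union_right _ (List.mem_toFinset.mpr h)
  have hclen : c.length ≤ p.length + q.length := by
    have h1 : c.edges.toFinset.card = c.length := by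
      rw [List.toFinset_card_of_nodup hnodup, c.length_edges]
    calc c.length = c.edges.toFinset.card := h1.symm
      _ ≤ (p.edges.toFinset ∪ q.edges.toFinset).card := Finset.card_le_card hsubs
      _ ≤ p.edges.toFinset.card + q.edges.toFinset.card := Finset.card_union_le _ _
      _ ≤ p.edges.length + q.edges.length :=
          Nat.add_le_add (List.toFinset_card_le _) (List.toFinset_card_le _)
      _ = p.length + q.length := by rw [p.length_edges, q.length_edges]
  have hc' : (c.mapLe hle).IsCycle := Walk.IsCycle.mapLe hle hc
  have := (SimpleGraph.le_egirth.mp le_rfl) a (c.mapLe hle) hc'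
  have hlen' : (c.mapLe hle).length = c.length := by
    simp [Walk.mapLe]
  rw [hlen'] at this
  exact this.trans (by exact_mod_cast hclen)



/-- Fiberwise counting: if every fiber of `R` over `a ∈ A` has `m` elements, then
`R.ncard = m * A.ncard`. -/
lemma ncard_fiber_fst {α β : Type*} [Finite α] [Finite β] {R : Set (α × β)} {A : Set α} {m : ℕ}
    (hsub : ∀ ab ∈ R, Prod.fst ab ∈ A) (hfib : ∀ a ∈ A, {b | (a, b) ∈ R}.ncard = m) :
    R.ncard = m * A.ncard := by
  classical
  have : Fintype α := Fintype.ofFinite α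
  have : Fintype β := Fintype.ofFinite β
  have hR : R.toFinset.card = R.ncard := (Set.ncard_eq_toFinset_card' R).symm
  have hA : A.toFinset.card = A.ncard := (Set.ncard_eq_toFinset_card' A).symm
  rw [← hR, ← hA]
  rw [Finset.card_eq_sum_card_fiberwise (f := Prod.fst) (t := A.toFinset)
    (fun x hx => Set.mem_toFinset.mpr (hsub x (Set.mem_toFinset.mp hx)))]
  rw [Finset.sum_congr rfl (fun a ha => ?_), Finset.sum_const, smul_eq_mul, mul_comm]
  have ha' : a ∈ A := Set.mem_toFinset.mp ha
  rw [← hfib a ha', Set.ncard_eq_toFinset_card' {b | (a, b) ∈ R}]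
  apply Finset.card_bij (fun x _ => x.2)
  · rintro ⟨x1, x2⟩ hx
    simp only [Finset.mem_filter, Set.mem_toFinset] at hx ⊢
    obtain ⟨h1, h2⟩ := hx
    subst h2
    exact h1
  · rintro ⟨x1, x2⟩ hx ⟨y1, y2⟩ hy hxy
    simp only [Finset.mem_filter, Set.mem_toFinset] at hx hy
    simp only [Prod.mk.injEq]
    exact ⟨hx.2.trans hy.2.symm, hxy⟩
  · intro b hb
    simp only [Set.mem_toFinset, Set.mem_setOf_eq] at hb
    refine ⟨(a, b), ?_, rfl⟩
    simp only [Finset.mem_filter, Set.mem_toFinset]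
    exact ⟨hb, by trivial⟩

lemma ncard_fiber_snd {α β : Type*} [Finite α] [Finite β] {R : Set (α × β)} {B : Set β} {n : ℕ}
    (hsub : ∀ ab ∈ R, Prod.snd ab ∈ B) (hfib : ∀ b ∈ B, {a | (a, b) ∈ R}.ncard = n) :
    R.ncard = n * B.ncard := by
  classical
  have hswap : ((fun ab : α × β => (ab.2, ab.1)) '' R).ncard = R.ncard :=
    Set.ncard_image_of_injective _ (fun x y h => by
      obtain ⟨x1,x2⟩ := x; obtain ⟨y1,y2⟩ := y; simpa [Prod.ext_iff, and_comm] using h)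
  rw [← hswap]
  apply ncard_fiber_fst (A := B)
  · rintro ⟨b, a⟩ ⟨⟨a', b'⟩, hmem, heq⟩
    simp only [Prod.mk.injEq] at heq
    exact heq.1 ▸ hsub _ hmem
  · intro b hb
    rw [← hfib b hb]
    congr 1
    ext a
    constructor
    · rintro ⟨⟨a', b'⟩, hmem, heq⟩
      simp only [Prod.mk.injEq] at heq
      obtain ⟨h1, h2⟩ := heq
      exact h1 ▸ h2 ▸ hmem
    · intro h
      exact ⟨(a, b), h, rfl⟩

lemma ncard_fiber_snd_le {α β : Type*} [Finite α] [Finite β] {R : Set (α × β)} {B : Set β} {n : ℕ}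
    (hsub : ∀ ab ∈ R, Prod.snd ab ∈ B) (hfib : ∀ b ∈ B, {a | (a, b) ∈ R}.ncard ≤ n) :
    R.ncard ≤ n * B.ncard := by
  classical
  have : Fintype α := Fintype.ofFinite α
  have : Fintype β := Fintype.ofFinite β
  rw [Set.ncard_eq_toFinset_card' R, Set.ncard_eq_toFinset_card' B]
  rw [Finset.card_eq_sum_card_fiberwise (f := Prod.snd) (t := B.toFinset)
    (fun x hx => Set.mem_toFinset.mpr (hsub x (Set.mem_toFinset.mp hx)))]
  rw [mul_comm]
  apply Finset.sum_le_card_nsmul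
  intro b hb
  have hb' : b ∈ B := Set.mem_toFinset.mp hb
  refine le_trans ?_ (hfib b hb')
  rw [Set.ncard_eq_toFinset_card' {a | (a, b) ∈ R}]
  apply Finset.card_le_card_of_injOn (fun x => x.1)
  · rintro ⟨x1, x2⟩ hx
    simp only [Finset.mem_coe, Finset.mem_filter, Set.mem_toFinset] at hx
    simp only [Finset.mem_coe, Set.mem_toFinset, Set.mem_setOf_eq]
    obtain ⟨h1, h2⟩ := hx
    subst h2
    exact h1
  · rintro ⟨x1, x2⟩ hx ⟨y1, y2⟩ hy hxy
    simp only [Finset.mem_coe, Finset.mem_filter, Set.mem_toFinset] at hx hy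
    simp only [Prod.mk.injEq]
    exact ⟨hxy, hx.2.trans hy.2.symm⟩

/-- Double counting with constant fibers on both sides. -/
lemma double_count {α β : Type*} [Finite α] [Finite β] {R : Set (α × β)} {A : Set α} {B : Set β}
    {m n : ℕ} (hA : ∀ ab ∈ R, Prod.fst ab ∈ A) (hB : ∀ ab ∈ R, Prod.snd ab ∈ B)
    (hfa : ∀ a ∈ A, {b | (a, b) ∈ R}.ncard = m) (hfb : ∀ b ∈ B, {a | (a, b) ∈ R}.ncard = n) :
    m * A.ncard = n * B.ncard := by
  rw [← ncard_fiber_fst hA hfa, ← ncard_fiber_snd hB hfb]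


section BFS

variable {X Y : Type*} {J : X → Y → Prop}


lemma adj_isLeft_ne {u v : X ⊕ Y} (h : (incidenceGraph J).Adj u v) : u.isLeft = !v.isLeft := by
  cases u <;> cases v <;> simp_all [incidenceGraph, IncAdj]

lemma walk_even_iff : ∀ {u v : X ⊕ Y} (w : (incidenceGraph J).Walk u v),
    (Even w.length ↔ u.isLeft = v.isLeft) := by
  intro u v w
  induction w with
  | nil => simp
  | @cons a b c h p ih =>
    have hadj := adj_isLeft_ne h
    rw [Walk.length_cons, Nat.even_add_one, ih, hadj]
    cases hb : b.isLeft <;> cases hc : c.isLeft <;> simp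

variable [Finite X] [Finite Y] {s t : ℕ}

section Reg

variable (hgirth : 12 ≤ (incidenceGraph J).egirth)
  (hconn : (incidenceGraph J).Connected)
  (hdiam : ∀ u v : X ⊕ Y, (incidenceGraph J).dist u v ≤ 6)

include hgirth in
lemma path_unique {u v : X ⊕ Y} {p q : (incidenceGraph J).Walk u v} (hp : p.IsPath) (hq : q.IsPath)
    (hlen : p.length + q.length ≤ 11) : p = q := by
  by_contra hne
  have h1 := egirth_le_of_two_paths hp hq hne
  have h2 : ((12 : ℕ) : ℕ∞) ≤ ((p.length + q.length : ℕ) : ℕ∞) :=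
    le_trans (by exact_mod_cast hgirth) h1
  rw [Nat.cast_le] at h2
  omega

include hgirth hconn in
lemma dist_eq_of_path {u v : X ⊕ Y} {p : (incidenceGraph J).Walk u v} (hp : p.IsPath) (hl : p.length ≤ 5) :
    (incidenceGraph J).dist u v = p.length := by
  obtain ⟨g, hg, hgl⟩ := hconn.exists_path_of_dist u v
  have hle := SimpleGraph.dist_le p
  have : g = p := path_unique hgirth hg hp (by omega)
  rw [← hgl, this]

lemma dist_le_of_mem_support {u v w : X ⊕ Y} (p : (incidenceGraph J).Walk u v) (hw : w ∈ p.support) :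
    (incidenceGraph J).dist u w ≤ p.length := by
  classical
  exact le_trans (SimpleGraph.dist_le (p.takeUntil w hw)) (p.length_takeUntil_le hw)

include hgirth hconn in
lemma pred_unique {r v : X ⊕ Y} (h1 : 1 ≤ (incidenceGraph J).dist r v) (h5 : (incidenceGraph J).dist r v ≤ 5) :
    {u | (incidenceGraph J).Adj u v ∧ (incidenceGraph J).dist r u + 1 = (incidenceGraph J).dist r v}.ncard = 1 := by
  obtain ⟨g, hg, hgl⟩ := hconn.exists_path_of_dist v r
  have hdvr : (incidenceGraph J).dist v r = (incidenceGraph J).dist r v := SimpleGraph.dist_comm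
  have hnil : ¬ g.Nil := by
    rw [Walk.nil_iff_length_eq]
    omega
  obtain ⟨u₀, hadj, g', rfl⟩ := Walk.not_nil_iff.mp hnil
  have hlg : g'.length + 1 = (incidenceGraph J).dist r v := by
    rw [← hdvr, ← hgl]; simp
  have hg' : g'.IsPath := hg.of_cons
  have hu₀ : (incidenceGraph J).dist r u₀ + 1 = (incidenceGraph J).dist r v := by
    have := dist_eq_of_path hgirth hconn (p := g'.reverse) hg'.reverse (by simp; omega)
    simp only [Walk.length_reverse] at this
    omega
  rw [Set.ncard_eq_one]
  refine ⟨u₀, ?_⟩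
  ext u
  simp only [Set.mem_setOf_eq, Set.mem_singleton_iff]
  constructor
  · rintro ⟨huv, hud⟩
    obtain ⟨pu, hpu, hpul⟩ := hconn.exists_path_of_dist r u
    have hvns : v ∉ pu.support := by
      intro hmem
      have := dist_le_of_mem_support pu hmem
      omega
    have hw : (Walk.cons huv.symm pu.reverse).IsPath := by
      rw [Walk.cons_isPath_iff]
      exact ⟨hpu.reverse, by simp [Walk.support_reverse]; exact fun h => hvns h⟩
    have hweq : Walk.cons huv.symm pu.reverse = Walk.cons hadj g' :=
      path_unique hgirth hw hg (by simp [hpul]; omega)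
    have := congrArg (fun w : (incidenceGraph J).Walk v r => w.getVert 1) hweq
    simpa [Walk.getVert_cons _ _ one_ne_zero] using this
  · rintro rfl
    exact ⟨hadj.symm, hu₀⟩

include hconn in
lemma even_dist_iff (r u : X ⊕ Y) : Even ((incidenceGraph J).dist r u) ↔ r.isLeft = u.isLeft := by
  obtain ⟨g, hg, hgl⟩ := hconn.exists_path_of_dist r u
  rw [← hgl]
  exact walk_even_iff g

include hconn in
lemma adj_dist_dichotomy {r u v : X ⊕ Y} (h : (incidenceGraph J).Adj u v) :
    (incidenceGraph J).dist r v = (incidenceGraph J).dist r u + 1 ∨ (incidenceGraph J).dist r u = (incidenceGraph J).dist r v + 1 := by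
  have huv : (incidenceGraph J).dist u v ≤ 1 := by
    have := SimpleGraph.dist_le (Walk.cons h Walk.nil)
    simpa using this
  have hvu : (incidenceGraph J).dist v u ≤ 1 := by rw [SimpleGraph.dist_comm]; exact huv
  have h1 : (incidenceGraph J).dist r v ≤ (incidenceGraph J).dist r u + 1 :=
    le_trans (hconn.dist_triangle (v := u)) (by omega)
  have h2 : (incidenceGraph J).dist r u ≤ (incidenceGraph J).dist r v + 1 :=
    le_trans (hconn.dist_triangle (v := v)) (by omega)
  have hne : (incidenceGraph J).dist r u ≠ (incidenceGraph J).dist r v := by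
    intro heq
    have e1 := even_dist_iff hconn r u
    have e2 := even_dist_iff hconn r v
    rw [heq] at e1
    have hlr := adj_isLeft_ne h
    rw [e2] at e1
    rcases u with pu | lu <;> rcases v with pv | lv <;> rcases r with pr | lr <;> simp_all
  omega

include hgirth hconn in
lemma level_one {r : X ⊕ Y} {d : ℕ} (hdeg : ((incidenceGraph J).neighborSet r).ncard = d) :
    {v | (incidenceGraph J).dist r v = 1}.ncard = d := by
  have hset : {v | (incidenceGraph J).dist r v = 1} = (incidenceGraph J).neighborSet r := by
    ext v
    simp only [Set.mem_setOf_eq, SimpleGraph.mem_neighborSet]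
    constructor
    · intro h
      obtain ⟨g, hg, hgl⟩ := hconn.exists_path_of_dist r v
      rw [h] at hgl
      have hnil : ¬ g.Nil := by rw [Walk.nil_iff_length_eq]; omega
      obtain ⟨u₀, hadj, g', rfl⟩ := Walk.not_nil_iff.mp hnil
      have : g'.length = 0 := by simpa using hgl
      have := Walk.eq_of_length_eq_zero this
      exact this ▸ hadj
    · intro h
      have hp : (Walk.cons h Walk.nil).IsPath := by simp [h.ne]
      have := dist_eq_of_path hgirth hconn hp (by simp)
      simpa using this
  rw [hset, hdeg]

include hgirth hconn in
lemma fiber_above {r u : X ⊕ Y} {k d : ℕ} (hk1 : 1 ≤ k) (hk4 : k ≤ 5)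
    (hu : (incidenceGraph J).dist r u = k)
    (hdeg : ((incidenceGraph J).neighborSet u).ncard = d)
    (hdich : ∀ v, (incidenceGraph J).Adj u v →
      (incidenceGraph J).dist r v = k + 1 ∨ (incidenceGraph J).dist r v + 1 = k) :
    {v | (incidenceGraph J).dist r v = k + 1 ∧ (incidenceGraph J).Adj u v}.ncard = d - 1 := by
  have hset : {v | (incidenceGraph J).dist r v = k + 1 ∧ (incidenceGraph J).Adj u v} =
      (incidenceGraph J).neighborSet u \ {w | (incidenceGraph J).Adj w u ∧ (incidenceGraph J).dist r w + 1 = (incidenceGraph J).dist r u} := by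
    ext v
    simp only [Set.mem_setOf_eq, Set.mem_diff, SimpleGraph.mem_neighborSet, hu]
    constructor
    · rintro ⟨h1, h2⟩
      exact ⟨h2, fun hc => by omega⟩
    · rintro ⟨h1, h2⟩
      refine ⟨?_, h1⟩
      rcases hdich v h1 with h | h
      · exact h
      · exact absurd ⟨h1.symm, h⟩ h2
  rw [hset, Set.ncard_diff (by rintro w ⟨h1, -⟩; exact h1.symm)]
  rw [hdeg, pred_unique hgirth hconn (by omega) (by omega)]

include hgirth hconn in
lemma level_succ {r : X ⊕ Y} {k d : ℕ} (hk1 : 1 ≤ k) (hk4 : k ≤ 4)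
    (hdeg : ∀ u, (incidenceGraph J).dist r u = k → ((incidenceGraph J).neighborSet u).ncard = d) :
    {v | (incidenceGraph J).dist r v = k + 1}.ncard =
      (d - 1) * {u | (incidenceGraph J).dist r u = k}.ncard := by
  set R : Set ((X ⊕ Y) × (X ⊕ Y)) := {x | (incidenceGraph J).dist r x.1 = k + 1 ∧
    (incidenceGraph J).dist r x.2 = k ∧ (incidenceGraph J).Adj x.2 x.1} with hR
  have h1 : R.ncard = 1 * {v | (incidenceGraph J).dist r v = k + 1}.ncard := by
    apply ncard_fiber_fst
    · rintro ⟨v, u⟩ ⟨hv, -, -⟩; exact hv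
    · intro v hv
      have : {b | (v, b) ∈ R} = {u | (incidenceGraph J).Adj u v ∧
          (incidenceGraph J).dist r u + 1 = (incidenceGraph J).dist r v} := by
        ext u
        simp only [hR, Set.mem_setOf_eq]
        rw [Set.mem_setOf_eq] at hv
        constructor
        · rintro ⟨-, h2, h3⟩; exact ⟨h3, by omega⟩
        · rintro ⟨h2, h3⟩; exact ⟨hv, by omega, h2⟩
      rw [this]
      exact pred_unique hgirth hconn (by rw [Set.mem_setOf_eq] at hv; omega)
        (by rw [Set.mem_setOf_eq] at hv; omega)
  have h2 : R.ncard = (d - 1) * {u | (incidenceGraph J).dist r u = k}.ncard := by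
    apply ncard_fiber_snd
    · rintro ⟨v, u⟩ ⟨-, hu, -⟩; exact hu
    · intro u hu
      rw [Set.mem_setOf_eq] at hu
      have : {a | (a, u) ∈ R} = {v | (incidenceGraph J).dist r v = k + 1 ∧
          (incidenceGraph J).Adj u v} := by
        ext v
        simp only [hR, Set.mem_setOf_eq]
        tauto
      rw [this]
      apply fiber_above hgirth hconn hk1 (by omega) hu (hdeg u hu)
      intro v hadj
      rcases adj_dist_dichotomy hconn (r := r) hadj with h | h
      · left; omega
      · right; omega
  rw [one_mul] at h1
  rw [← h1, h2]

include hgirth hconn hdiam in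
lemma level_six {r : X ⊕ Y} {d5 d6 : ℕ}
    (hdeg5 : ∀ u, (incidenceGraph J).dist r u = 5 → ((incidenceGraph J).neighborSet u).ncard = d5)
    (hdeg6 : ∀ v, (incidenceGraph J).dist r v = 6 → ((incidenceGraph J).neighborSet v).ncard = d6) :
    d6 * {v | (incidenceGraph J).dist r v = 6}.ncard =
      (d5 - 1) * {u | (incidenceGraph J).dist r u = 5}.ncard := by
  set R : Set ((X ⊕ Y) × (X ⊕ Y)) := {x | (incidenceGraph J).dist r x.1 = 6 ∧
    (incidenceGraph J).dist r x.2 = 5 ∧ (incidenceGraph J).Adj x.2 x.1} with hR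
  have h1 : R.ncard = d6 * {v | (incidenceGraph J).dist r v = 6}.ncard := by
    apply ncard_fiber_fst
    · rintro ⟨v, u⟩ ⟨hv, -, -⟩; exact hv
    · intro v hv
      rw [Set.mem_setOf_eq] at hv
      have : {b | (v, b) ∈ R} = (incidenceGraph J).neighborSet v := by
        ext u
        simp only [hR, Set.mem_setOf_eq, SimpleGraph.mem_neighborSet]
        constructor
        · rintro ⟨-, -, h3⟩; exact h3.symm
        · intro h
          refine ⟨hv, ?_, h.symm⟩
          rcases adj_dist_dichotomy hconn (r := r) h.symm with hc | hc
          · omega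
          · have := hdiam r u; omega
      rw [this]
      exact hdeg6 v hv
  have h2 : R.ncard = (d5 - 1) * {u | (incidenceGraph J).dist r u = 5}.ncard := by
    apply ncard_fiber_snd
    · rintro ⟨v, u⟩ ⟨-, hu, -⟩; exact hu
    · intro u hu
      rw [Set.mem_setOf_eq] at hu
      have : {a | (a, u) ∈ R} = {v | (incidenceGraph J).dist r v = 6 ∧
          (incidenceGraph J).Adj u v} := by
        ext v
        simp only [hR, Set.mem_setOf_eq]
        tauto
      rw [this]
      apply fiber_above hgirth hconn (by omega) (by omega) hu (hdeg5 u hu)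
      intro v hadj
      rcases adj_dist_dichotomy hconn (r := r) hadj with h | h
      · left; omega
      · right; omega
  rw [← h1, h2]

end Reg


section Reg2

variable (hline : ∀ l : Y, {p : X | J p l}.ncard = s + 1)
  (hpoint : ∀ p : X, {l : Y | J p l}.ncard = t + 1)
  (hgirth : 12 ≤ (incidenceGraph J).egirth)
  (hconn : (incidenceGraph J).Connected)
  (hdiam : ∀ u v : X ⊕ Y, (incidenceGraph J).dist u v ≤ 6)

include hpoint in
lemma deg_point (p : X) : ((incidenceGraph J).neighborSet (Sum.inl p)).ncard = t + 1 := by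
  have hset : (incidenceGraph J).neighborSet (Sum.inl p) = Sum.inr '' {l | J p l} := by
    ext w
    cases w with
    | inl x => simp [SimpleGraph.mem_neighborSet, incidenceGraph, IncAdj]
    | inr l => simp [SimpleGraph.mem_neighborSet, incidenceGraph, IncAdj]
  rw [hset, Set.ncard_image_of_injective _ Sum.inr_injective, hpoint]

include hline in
lemma deg_line (l : Y) : ((incidenceGraph J).neighborSet (Sum.inr l)).ncard = s + 1 := by
  have hset : (incidenceGraph J).neighborSet (Sum.inr l) = Sum.inl '' {p | J p l} := by
    ext w
    cases w with
    | inl x => simp [SimpleGraph.mem_neighborSet, incidenceGraph, IncAdj]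
    | inr l' => simp [SimpleGraph.mem_neighborSet, incidenceGraph, IncAdj]
  rw [hset, Set.ncard_image_of_injective _ Sum.inl_injective, hline]

include hconn in
lemma level_odd_point {l₀ : Y} {u : X ⊕ Y} {k : ℕ}
    (h : (incidenceGraph J).dist (Sum.inr l₀) u = k) (hodd : ¬ Even k) : ∃ p : X, u = Sum.inl p := by
  have he := even_dist_iff hconn (Sum.inr l₀) u
  rw [h] at he
  cases u with
  | inl p => exact ⟨p, rfl⟩
  | inr l => simp at he; exact absurd he hodd

include hconn in
lemma level_even_line {l₀ : Y} {u : X ⊕ Y} {k : ℕ}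
    (h : (incidenceGraph J).dist (Sum.inr l₀) u = k) (heven : Even k) : ∃ l : Y, u = Sum.inr l := by
  have he := even_dist_iff hconn (Sum.inr l₀) u
  rw [h] at he
  cases u with
  | inl p => simp at he; exact absurd heven (Nat.not_even_iff_odd.mpr he)
  | inr l => exact ⟨l, rfl⟩

include hline hpoint hgirth hconn hdiam in
lemma bfs_levels (l₀ : Y) :
    {v | (incidenceGraph J).dist (Sum.inr l₀) v = 6}.ncard = s ^ 2 * t ^ 3 ∧
    {v | (incidenceGraph J).dist (Sum.inr l₀) v = 5}.ncard = (s + 1) * s ^ 2 * t ^ 2 ∧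
    {v | (incidenceGraph J).dist (Sum.inr l₀) v = 4}.ncard = (s + 1) * s * t ^ 2 ∧
    {v | (incidenceGraph J).dist (Sum.inr l₀) v = 2}.ncard = (s + 1) * t := by
  set r := (Sum.inr l₀ : X ⊕ Y) with hr
  have hdeg_odd : ∀ k, ¬ Even k → ∀ u, (incidenceGraph J).dist r u = k →
      ((incidenceGraph J).neighborSet u).ncard = t + 1 := by
    intro k hk u hu
    obtain ⟨p, rfl⟩ := level_odd_point hconn hu hk
    exact deg_point hpoint p
  have hdeg_even : ∀ k, Even k → ∀ u, (incidenceGraph J).dist r u = k →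
      ((incidenceGraph J).neighborSet u).ncard = s + 1 := by
    intro k hk u hu
    obtain ⟨l, rfl⟩ := level_even_line hconn hu hk
    exact deg_line hline l
  have h1 : {v | (incidenceGraph J).dist r v = 1}.ncard = s + 1 :=
    level_one hgirth hconn (deg_line hline l₀)
  have h2 : {v | (incidenceGraph J).dist r v = 2}.ncard = t * (s + 1) := by
    have := level_succ hgirth hconn (r := r) (k := 1) (d := t + 1) (by omega) (by omega)
      (hdeg_odd 1 (by decide))
    rw [this, h1, Nat.add_sub_cancel]
  have h3 : {v | (incidenceGraph J).dist r v = 3}.ncard = s * (t * (s + 1)) := by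
    have := level_succ hgirth hconn (r := r) (k := 2) (d := s + 1) (by omega) (by omega)
      (hdeg_even 2 (by decide))
    rw [this, h2, Nat.add_sub_cancel]
  have h4 : {v | (incidenceGraph J).dist r v = 4}.ncard = t * (s * (t * (s + 1))) := by
    have := level_succ hgirth hconn (r := r) (k := 3) (d := t + 1) (by omega) (by omega)
      (hdeg_odd 3 (by decide))
    rw [this, h3, Nat.add_sub_cancel]
  have h5 : {v | (incidenceGraph J).dist r v = 5}.ncard = s * (t * (s * (t * (s + 1)))) := by
    have := level_succ hgirth hconn (r := r) (k := 4) (d := s + 1) (by omega) (by omega)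
      (hdeg_even 4 (by decide))
    rw [this, h4, Nat.add_sub_cancel]
  have h6 : (s + 1) * {v | (incidenceGraph J).dist r v = 6}.ncard =
      t * (s * (t * (s * (t * (s + 1))))) := by
    have := level_six hgirth hconn hdiam (r := r) (d5 := t + 1) (d6 := s + 1)
      (hdeg_odd 5 (by decide)) (hdeg_even 6 (by decide))
    rw [this, h5, Nat.add_sub_cancel]
  refine ⟨?_, ?_, ?_, ?_⟩
  · have : (s + 1) * {v | (incidenceGraph J).dist r v = 6}.ncard = (s + 1) * (s ^ 2 * t ^ 3) := by
      rw [h6]; ring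
    exact Nat.eq_of_mul_eq_mul_left (by omega) this
  · rw [h5]; ring
  · rw [h4]; ring
  · rw [h2]; ring

include hline hpoint hgirth hconn hdiam in
lemma bfs_opp (l₀ : Y) :
    {l : Y | (incidenceGraph J).dist (Sum.inr l₀) (Sum.inr l) = 6}.ncard = s ^ 2 * t ^ 3 := by
  obtain ⟨h6, -, -, -⟩ := bfs_levels hline hpoint hgirth hconn hdiam l₀
  rw [← h6]
  have : {v | (incidenceGraph J).dist (Sum.inr l₀) v = 6} =
      Sum.inr '' {l : Y | (incidenceGraph J).dist (Sum.inr l₀) (Sum.inr l) = 6} := by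
    ext v
    constructor
    · intro hv
      obtain ⟨l, rfl⟩ := level_even_line hconn hv (by decide)
      exact ⟨l, hv, rfl⟩
    · rintro ⟨l, hl, rfl⟩
      exact hl
  rw [this, Set.ncard_image_of_injective _ Sum.inr_injective]

include hline hpoint hgirth hconn hdiam in
lemma bfs_total (l₀ : Y) :
    Nat.card Y = 1 + (s + 1) * t + (s + 1) * s * t ^ 2 + s ^ 2 * t ^ 3 := by
  obtain ⟨h6, -, h4, h2⟩ := bfs_levels hline hpoint hgirth hconn hdiam l₀
  have hcard : ∀ k : ℕ, Even k →
      {l : Y | (incidenceGraph J).dist (Sum.inr l₀) (Sum.inr l) = k}.ncard =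
      {v | (incidenceGraph J).dist (Sum.inr l₀) v = k}.ncard := by
    intro k hk
    have himg : {v | (incidenceGraph J).dist (Sum.inr l₀) v = k} =
        Sum.inr '' {l : Y | (incidenceGraph J).dist (Sum.inr l₀) (Sum.inr l) = k} := by
      ext v
      constructor
      · intro hv
        obtain ⟨l, rfl⟩ := level_even_line hconn hv hk
        exact ⟨l, hv, rfl⟩
      · rintro ⟨l, hl, rfl⟩
        exact hl
    rw [himg, Set.ncard_image_of_injective _ Sum.inr_injective]
  have hdisj : ∀ a b : ℕ, a ≠ b →
      Disjoint {l : Y | (incidenceGraph J).dist (Sum.inr l₀) (Sum.inr l) = a}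
        {l : Y | (incidenceGraph J).dist (Sum.inr l₀) (Sum.inr l) = b} := by
    intro a b hab
    rw [Set.disjoint_left]
    intro l ha hb
    rw [Set.mem_setOf_eq] at ha hb
    omega
  have h0 : {l : Y | (incidenceGraph J).dist (Sum.inr l₀) (Sum.inr l) = 0} = {l₀} := by
    ext l
    rw [Set.mem_setOf_eq, hconn.dist_eq_zero_iff, Set.mem_singleton_iff]
    constructor
    · intro h; exact (Sum.inr_injective h).symm
    · rintro rfl; rfl
  have huniv : (Set.univ : Set Y) =
      ({l : Y | (incidenceGraph J).dist (Sum.inr l₀) (Sum.inr l) = 0} ∪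
       {l : Y | (incidenceGraph J).dist (Sum.inr l₀) (Sum.inr l) = 2}) ∪
      ({l : Y | (incidenceGraph J).dist (Sum.inr l₀) (Sum.inr l) = 4} ∪
       {l : Y | (incidenceGraph J).dist (Sum.inr l₀) (Sum.inr l) = 6}) := by
    ext l
    simp only [Set.mem_univ, true_iff, Set.mem_union, Set.mem_setOf_eq]
    have heven : Even ((incidenceGraph J).dist (Sum.inr l₀) (Sum.inr l)) := by
      rw [even_dist_iff hconn]
      simp
    have hle := hdiam (Sum.inr l₀) (Sum.inr l)
    obtain ⟨m, hm⟩ := heven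
    omega
  have := congrArg Set.ncard huniv
  rw [Set.ncard_univ] at this
  rw [this]
  rw [Set.ncard_union_eq (by
    apply Set.disjoint_union_right.mpr
    constructor
    · apply Set.disjoint_union_left.mpr
      exact ⟨hdisj 0 4 (by omega), hdisj 2 4 (by omega)⟩
    · apply Set.disjoint_union_left.mpr
      exact ⟨hdisj 0 6 (by omega), hdisj 2 6 (by omega)⟩)]
  rw [Set.ncard_union_eq (hdisj 0 2 (by omega)), Set.ncard_union_eq (hdisj 4 6 (by omega))]
  rw [h0, Set.ncard_singleton]
  rw [hcard 2 (by decide), hcard 4 (by decide), hcard 6 (by decide), h2, h4, h6]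
  ring

end Reg2

end BFS

section Apply

variable {X Y : Type*} [Finite X] [Finite Y] {J : X → Y → Prop}

lemma hyp_girth {s t : ℕ} (h : IsGenPolygon J 6 s t) : 12 ≤ (incidenceGraph J).egirth := by
  rw [h.egirth_eq]
  norm_num

lemma hyp_conn {s t : ℕ} (h : IsGenPolygon J 6 s t) : (incidenceGraph J).Connected := by
  have hne : Nonempty (X ⊕ Y) := ⟨Sum.inl h.pts_nonempty.some⟩
  rw [SimpleGraph.connected_iff]
  refine ⟨fun u v => ?_, hne⟩
  apply SimpleGraph.reachable_of_edist_ne_top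
  have h1 : (incidenceGraph J).edist u v ≤ (6 : ℕ) := by
    rw [← h.ediam_eq]
    exact SimpleGraph.edist_le_ediam
  intro hc
  rw [hc] at h1
  exact absurd h1 (by simp)

lemma hyp_diam {s t : ℕ} (h : IsGenPolygon J 6 s t) :
    ∀ u v : X ⊕ Y, (incidenceGraph J).dist u v ≤ 6 := by
  intro u v
  have h1 : (incidenceGraph J).edist u v ≤ ((6 : ℕ) : ℕ∞) := by
    rw [← h.ediam_eq]
    exact SimpleGraph.edist_le_ediam
  have := ENat.toNat_le_toNat h1 (by simp)
  simpa [SimpleGraph.dist] using this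

lemma gp_opp {s t : ℕ} (h : IsGenPolygon J 6 s t) (l₀ : Y) :
    {l : Y | (incidenceGraph J).dist (Sum.inr l₀) (Sum.inr l) = 6}.ncard = s ^ 2 * t ^ 3 :=
  bfs_opp h.line_card h.point_card (hyp_girth h) (hyp_conn h) (hyp_diam h) l₀

lemma gp_total {s t : ℕ} (h : IsGenPolygon J 6 s t) (l₀ : Y) :
    Nat.card Y = 1 + (s + 1) * t + (s + 1) * s * t ^ 2 + s ^ 2 * t ^ 3 :=
  bfs_total h.line_card h.point_card (hyp_girth h) (hyp_conn h) (hyp_diam h) l₀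

end Apply

section Sub

variable {P L : Type*} [Fintype P] [Fintype L] {I : P → L → Prop} {q : ℕ}

/-- The embedding of the incidence graph of a subgeometry into the ambient incidence graph. -/
def subMap (P' : Set P) (L' : Set L) : (↥P' ⊕ ↥L') → (P ⊕ L) :=
  Sum.map Subtype.val Subtype.val

lemma subMap_injective (P' : Set P) (L' : Set L) : Function.Injective (subMap P' L') :=
  Function.Injective.sumMap Subtype.val_injective Subtype.val_injective

def subHom (I : P → L → Prop) (P' : Set P) (L' : Set L) :
    (incidenceGraph (fun (p : P') (l : L') => I p.1 l.1)) →g (incidenceGraph I) where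
  toFun := subMap P' L'
  map_rel' := by
    intro a b h
    cases a <;> cases b <;> simp_all [incidenceGraph, IncAdj, subMap, Sum.map]

lemma sub_dist_le (hsub : IsSubhexagon I q 1 P' L') (u v : ↥P' ⊕ ↥L') :
    (incidenceGraph I).dist (subMap P' L' u) (subMap P' L' v) ≤
      (incidenceGraph (fun (p : P') (l : L') => I p.1 l.1)).dist u v := by
  obtain ⟨g, hg, hgl⟩ := (hyp_conn hsub.2).exists_path_of_dist u v
  have h := SimpleGraph.dist_le (g.map (subHom I P' L'))
  rwa [Walk.length_map, hgl] at h

lemma opp_iff (hhex : IsGenPolygon I 6 q q) (hsub : IsSubhexagon I q 1 P' L')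
    (l₁ l₂ : ↥L') :
    (incidenceGraph (fun (p : P') (l : L') => I p.1 l.1)).dist (Sum.inr l₁) (Sum.inr l₂) = 6 ↔
    (incidenceGraph I).dist (Sum.inr (l₁ : L)) (Sum.inr (l₂ : L)) = 6 := by
  constructor
  · intro h6
    have hle : (incidenceGraph I).dist (Sum.inr (l₁ : L)) (Sum.inr (l₂ : L)) ≤ 6 := by
      have := sub_dist_le hsub (Sum.inr l₁) (Sum.inr l₂)
      rw [h6] at this
      exact this
    by_contra hne
    have heven : Even ((incidenceGraph I).dist (Sum.inr (l₁ : L)) (Sum.inr (l₂ : L))) := by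
      rw [even_dist_iff (hyp_conn hhex)]
      simp
    have hne0 : (l₁ : L) ≠ (l₂ : L) := by
      intro heq
      have : l₁ = l₂ := Subtype.ext heq
      subst this
      rw [SimpleGraph.dist_self] at h6
      omega
    have hpos : (incidenceGraph I).dist (Sum.inr (l₁ : L)) (Sum.inr (l₂ : L)) ≠ 0 := by
      intro h0
      exact hne0 (Sum.inr_injective ((hyp_conn hhex).dist_eq_zero_iff.mp h0))
    -- so the ambient distance is 2 or 4
    obtain ⟨pS, hpS, hpSl⟩ := (hyp_conn hhex).exists_path_of_dist
      (Sum.inr (l₁ : L)) (Sum.inr (l₂ : L))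
    obtain ⟨gH, hgH, hgHl⟩ := (hyp_conn hsub.2).exists_path_of_dist (Sum.inr l₁) (Sum.inr l₂)
    have hmap : (gH.map (subHom I P' L')).IsPath :=
      Walk.map_isPath_of_injective (subMap_injective P' L') hgH
    have hmaplen : (gH.map (subHom I P' L')).length = 6 := by
      rw [Walk.length_map, hgHl, h6]
    have hnepq : pS ≠ gH.map (subHom I P' L') := by
      intro heq
      rw [heq] at hpSl
      exact hne (hmaplen.symm.trans hpSl).symm
    have hgl := egirth_le_of_two_paths hpS hmap hnepq
    have h12 := hyp_girth hhex
    have : ((12 : ℕ) : ℕ∞) ≤ ((pS.length + (gH.map (subHom I P' L')).length : ℕ) : ℕ∞) :=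
      le_trans (by exact_mod_cast h12) hgl
    rw [Nat.cast_le] at this
    rw [hmaplen, hpSl] at this
    obtain ⟨m, hm⟩ := heven
    omega
  · intro h6
    have h1 := sub_dist_le hsub (Sum.inr l₁) (Sum.inr l₂)
    have h2 := hyp_diam hsub.2 (Sum.inr l₁) (Sum.inr l₂)
    have : subMap P' L' (Sum.inr l₁) = Sum.inr (l₁ : L) := rfl
    rw [this] at h1
    have : subMap P' L' (Sum.inr l₂) = Sum.inr (l₂ : L) := rfl
    rw [this] at h1
    omega

lemma sub_opp_count (hhex : IsGenPolygon I 6 q q) (hsub : IsSubhexagon I q 1 P' L')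
    {l : L} (hl : l ∈ L') :
    {m : L | m ∈ L' ∧ (incidenceGraph I).dist (Sum.inr l) (Sum.inr m) = 6}.ncard = q ^ 2 := by
  have hopp := gp_opp hsub.2 ⟨l, hl⟩
  have himg : {m : L | m ∈ L' ∧ (incidenceGraph I).dist (Sum.inr l) (Sum.inr m) = 6} =
      Subtype.val '' {l₂ : ↥L' |
        (incidenceGraph (fun (p : P') (l : L') => I p.1 l.1)).dist
          (Sum.inr ⟨l, hl⟩) (Sum.inr l₂) = 6} := by
    ext m
    simp only [Set.mem_setOf_eq, Set.mem_image]
    constructor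
    · rintro ⟨hm, h6⟩
      exact ⟨⟨m, hm⟩, (opp_iff hhex hsub _ _).mpr h6, rfl⟩
    · rintro ⟨l₂, h6, rfl⟩
      exact ⟨l₂.2, (opp_iff hhex hsub _ _).mp h6⟩
  rw [himg, Set.ncard_image_of_injective _ Subtype.val_injective, hopp]
  ring

lemma sub_lines_nonempty (hsub : IsSubhexagon I q 1 P' L') : Nonempty ↥L' := by
  obtain ⟨p⟩ := hsub.2.pts_nonempty
  have h2 := hsub.2.point_card p
  have : {l : ↥L' | I p.1 l.1}.Nonempty := by
    rw [← Set.ncard_pos]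
    omega
  obtain ⟨l, -⟩ := this
  exact ⟨l⟩

lemma sub_lines_ncard (hsub : IsSubhexagon I q 1 P' L') :
    L'.ncard = 2 * (q ^ 2 + q + 1) := by
  obtain ⟨l₀⟩ := sub_lines_nonempty hsub
  have := gp_total hsub.2 l₀
  rw [← Nat.card_coe_set_eq, this]
  ring

lemma sub_point_pair (hsub : IsSubhexagon I q 1 P' L') {x : P} (hx : x ∈ P') :
    {m : L | I x m ∧ m ∈ L'}.ncard = 2 := by
  have h2 := hsub.2.point_card ⟨x, hx⟩
  have himg : {m : L | I x m ∧ m ∈ L'} =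
      Subtype.val '' {l : ↥L' | I x l.1} := by
    ext m
    simp only [Set.mem_setOf_eq, Set.mem_image]
    constructor
    · rintro ⟨hI, hm⟩
      exact ⟨⟨m, hm⟩, hI, rfl⟩
    · rintro ⟨l, hI, rfl⟩
      exact ⟨hI, l.2⟩
  rw [himg, Set.ncard_image_of_injective _ Subtype.val_injective]
  exact h2

end Sub

section Main

variable {P L : Type*} [Fintype P] [Fintype L] {I : P → L → Prop} {q : ℕ}

theorem main_bound (hq : 2 ≤ q) (hhex : IsGenPolygon I 6 q q)
    (hunique : ∀ l₁ l₂ : L,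
      (incidenceGraph I).dist (Sum.inr l₁) (Sum.inr l₂) = 6 →
      ∃! x : Set P × Set L, IsSubhexagon I q 1 x.1 x.2 ∧ l₁ ∈ x.2 ∧ l₂ ∈ x.2)
    (O : Set P)
    (hO : ∀ l : L, ∀ x ∈ O, ∀ y ∈ O, I x l → I y l → x = y)
    (hmeet : ∀ P' : Set P, ∀ L' : Set L, IsSubhexagon I q 1 P' L' →
      (O ∩ P').ncard ≠ q ^ 2 + q + 1) :
    O.ncard ≤ (q ^ 2 - q + 1) * (q ^ 2 + q) := by
  classical
  have hqpos : 0 < q := by omega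
  set SH : Set (Set P × Set L) := {x | IsSubhexagon I q 1 x.1 x.2} with hSH
  -- Step 1 : every line lies in exactly q^3 subhexagons
  have step1 : ∀ l : L, {H : Set P × Set L | H ∈ SH ∧ l ∈ H.2}.ncard = q ^ 3 := by
    intro l
    set A : Set L := {m : L | (incidenceGraph I).dist (Sum.inr l) (Sum.inr m) = 6} with hA
    set B : Set (Set P × Set L) := {H | H ∈ SH ∧ l ∈ H.2} with hB
    have hAcard : A.ncard = q ^ 5 := by
      rw [hA, gp_opp hhex l]; ring
    set R : Set (L × (Set P × Set L)) := {y |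
      (incidenceGraph I).dist (Sum.inr l) (Sum.inr y.1) = 6 ∧
      y.2 ∈ SH ∧ l ∈ y.2.2 ∧ y.1 ∈ y.2.2} with hR
    have h1 : R.ncard = 1 * A.ncard := by
      apply ncard_fiber_fst
      · rintro ⟨m, H⟩ ⟨hd, -, -, -⟩; exact hd
      · intro m hm
        rw [hA, Set.mem_setOf_eq] at hm
        obtain ⟨x₀, hx₀, huniq⟩ := hunique l m hm
        have : {b | (m, b) ∈ R} = {x₀} := by
          ext H
          simp only [hR, Set.mem_setOf_eq, Set.mem_singleton_iff]
          constructor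
          · rintro ⟨-, hsh, hl2, hm2⟩
            exact huniq H ⟨hsh, hl2, hm2⟩
          · rintro rfl
            exact ⟨hm, hx₀.1, hx₀.2.1, hx₀.2.2⟩
        rw [this, Set.ncard_singleton]
    have h2 : R.ncard = q ^ 2 * B.ncard := by
      apply ncard_fiber_snd
      · rintro ⟨m, H⟩ ⟨-, hsh, hl2, -⟩; exact ⟨hsh, hl2⟩
      · intro H hH
        rw [hB, Set.mem_setOf_eq] at hH
        obtain ⟨hsh, hl2⟩ := hH
        have : {a | (a, H) ∈ R} = {m : L | m ∈ H.2 ∧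
            (incidenceGraph I).dist (Sum.inr l) (Sum.inr m) = 6} := by
          ext m
          simp only [hR, Set.mem_setOf_eq]
          tauto
        rw [this]
        exact sub_opp_count hhex hsh hl2
    have := h1.symm.trans h2
    rw [one_mul, hAcard] at this
    have h5 : q ^ 2 * B.ncard = q ^ 2 * q ^ 3 := by rw [← this]; ring
    exact Nat.eq_of_mul_eq_mul_left (by positivity) h5
  -- Step 2 : every point lies in exactly (q+1)q^3/2 subhexagons
  have step2 : ∀ x : P, {H : Set P × Set L | H ∈ SH ∧ x ∈ H.1}.ncard * 2 = (q + 1) * q ^ 3 := by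
    intro x
    set B : Set (Set P × Set L) := {H | H ∈ SH ∧ x ∈ H.1} with hB
    set R : Set (L × (Set P × Set L)) := {y | I x y.1 ∧ y.2 ∈ SH ∧ y.1 ∈ y.2.2} with hR
    have h1 : R.ncard = q ^ 3 * {m : L | I x m}.ncard := by
      apply ncard_fiber_fst
      · rintro ⟨m, H⟩ ⟨hI, -, -⟩; exact hI
      · intro m hm
        have : {b | (m, b) ∈ R} = {H : Set P × Set L | H ∈ SH ∧ m ∈ H.2} := by
          ext H
          simp only [hR, Set.mem_setOf_eq]
          tauto
        rw [this]
        exact step1 m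
    have h2 : R.ncard = 2 * B.ncard := by
      apply ncard_fiber_snd
      · rintro ⟨m, H⟩ ⟨hI, hsh, hm2⟩
        exact ⟨hsh, hsh.1 x m hm2 hI⟩
      · intro H hH
        rw [hB, Set.mem_setOf_eq] at hH
        obtain ⟨hsh, hx1⟩ := hH
        have : {a | (a, H) ∈ R} = {m : L | I x m ∧ m ∈ H.2} := by
          ext m
          simp only [hR, Set.mem_setOf_eq]
          tauto
        rw [this]
        exact sub_point_pair hsh hx1
    have h3 := h1.symm.trans h2
    rw [hhex.point_card x] at h3
    rw [mul_comm, ← h3]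
    ring
  -- Step 3 : global incidence count between lines and subhexagons
  have hLne : Nonempty L := by
    obtain ⟨p⟩ := hhex.pts_nonempty
    have h2 := hhex.point_card p
    have : {l : L | I p l}.Nonempty := by
      rw [← Set.ncard_pos]
      omega
    obtain ⟨l, -⟩ := this
    exact ⟨l⟩
  obtain ⟨l₀⟩ := hLne
  have hNL : Nat.card L = 1 + (q + 1) * q + (q + 1) * q * q ^ 2 + q ^ 2 * q ^ 3 :=
    gp_total hhex l₀
  have step3 : q ^ 3 * Nat.card L = 2 * (q ^ 2 + q + 1) * SH.ncard := by
    set R : Set (L × (Set P × Set L)) := {y | y.2 ∈ SH ∧ y.1 ∈ y.2.2} with hR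
    have h1 : R.ncard = q ^ 3 * (Set.univ : Set L).ncard := by
      apply ncard_fiber_fst
      · rintro ⟨m, H⟩ -; exact Set.mem_univ m
      · intro m hm
        have : {b | (m, b) ∈ R} = {H : Set P × Set L | H ∈ SH ∧ m ∈ H.2} := by
          ext H
          simp only [hR, Set.mem_setOf_eq]
        rw [this]
        exact step1 m
    have h2 : R.ncard = (2 * (q ^ 2 + q + 1)) * SH.ncard := by
      apply ncard_fiber_snd
      · rintro ⟨m, H⟩ ⟨hsh, -⟩; exact hsh
      · intro H hH
        rw [hSH, Set.mem_setOf_eq] at hH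
        have : {a | (a, H) ∈ R} = H.2 := by
          ext m
          simp only [hR, Set.mem_setOf_eq]
          exact ⟨fun h => h.2, fun h => ⟨hH, h⟩⟩
        rw [this]
        exact sub_lines_ncard hH
    rw [Set.ncard_univ] at h1
    rw [← h1]
    exact h2
  -- Step 4 : each subhexagon contains at most q^2 + q points of O
  have step4 : ∀ H ∈ SH, (O ∩ H.1).ncard ≤ q ^ 2 + q := by
    intro H hH
    rw [hSH, Set.mem_setOf_eq] at hH
    set R : Set (P × L) := {y | y.1 ∈ O ∩ H.1 ∧ I y.1 y.2 ∧ y.2 ∈ H.2} with hR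
    have h1 : R.ncard = 2 * (O ∩ H.1).ncard := by
      apply ncard_fiber_fst
      · rintro ⟨x, m⟩ ⟨hx, -, -⟩; exact hx
      · intro x hx
        have : {b | (x, b) ∈ R} = {m : L | I x m ∧ m ∈ H.2} := by
          ext m
          simp only [hR, Set.mem_setOf_eq]
          tauto
        rw [this]
        exact sub_point_pair hH hx.2
    have h2 : R.ncard ≤ 1 * H.2.ncard := by
      apply ncard_fiber_snd_le
      · rintro ⟨x, m⟩ ⟨-, -, hm⟩; exact hm
      · intro m hm
        rw [Set.ncard_le_one (Set.toFinite _)]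
        rintro a ⟨⟨haO, -⟩, haI, -⟩ b ⟨⟨hbO, -⟩, hbI, -⟩
        exact hO m a haO b hbO haI hbI
    have h3 := sub_lines_ncard hH
    have h4 := hmeet H.1 H.2 hH
    omega
  -- Step 5 : final double counting
  have hdvd : 2 ∣ (q + 1) * q ^ 3 := by
    have he : Even (q * (q + 1)) := Nat.even_mul_succ_self q
    have : (q + 1) * q ^ 3 = (q * (q + 1)) * q ^ 2 := by ring
    rw [this]
    exact Dvd.dvd.mul_right he.two_dvd _
  set c : ℕ := (q + 1) * q ^ 3 / 2 with hc
  have hc2 : c * 2 = (q + 1) * q ^ 3 := Nat.div_mul_cancel hdvd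
  set R : Set (P × (Set P × Set L)) := {y | y.1 ∈ O ∧ y.2 ∈ SH ∧ y.1 ∈ y.2.1} with hR
  have hRa : R.ncard = c * O.ncard := by
    apply ncard_fiber_fst
    · rintro ⟨x, H⟩ ⟨hx, -, -⟩; exact hx
    · intro x hx
      have : {b | (x, b) ∈ R} = {H : Set P × Set L | H ∈ SH ∧ x ∈ H.1} := by
        ext H
        simp only [hR, Set.mem_setOf_eq]
        tauto
      rw [this]
      have := step2 x
      omega
  have hRb : R.ncard ≤ (q ^ 2 + q) * SH.ncard := by
    apply ncard_fiber_snd_le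
    · rintro ⟨x, H⟩ ⟨-, hsh, -⟩; exact hsh
    · intro H hH
      have : {a | (a, H) ∈ R} = O ∩ H.1 := by
        ext x
        simp only [hR, Set.mem_setOf_eq, Set.mem_inter_iff]
        tauto
      rw [this]
      exact step4 H hH
  have hstep : (q + 1) * q ^ 3 * O.ncard ≤ 2 * (q ^ 2 + q) * SH.ncard := by
    calc (q + 1) * q ^ 3 * O.ncard = (c * O.ncard) * 2 := by rw [← hc2]; ring
      _ ≤ ((q ^ 2 + q) * SH.ncard) * 2 := by
          rw [← hRa]
          exact Nat.mul_le_mul_right 2 hRb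
      _ = 2 * (q ^ 2 + q) * SH.ncard := by ring
  -- arithmetic endgame
  have hqsq : q ≤ q ^ 2 := Nat.le_self_pow two_ne_zero q
  set a : ℕ := q ^ 2 - q + 1 with ha
  have haq : a + q = q ^ 2 + 1 := by omega
  have hNLa : Nat.card L = (q + 1) * (q ^ 2 + q + 1) * a := by
    have h1 : (q + 1) * (q ^ 2 + q + 1) * (a + q) =
        (q + 1) * (q ^ 2 + q + 1) * a + (q + 1) * (q ^ 2 + q + 1) * q := by ring
    have h2 : (q + 1) * (q ^ 2 + q + 1) * (a + q) =
        (1 + (q + 1) * q + (q + 1) * q * q ^ 2 + q ^ 2 * q ^ 3) +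
          (q + 1) * (q ^ 2 + q + 1) * q := by
      rw [haq]; ring
    have h3 := h1.symm.trans h2
    have h4 := Nat.add_right_cancel h3
    rw [hNL, ← h4]
  have key : ((q + 1) * q ^ 3 * (q ^ 2 + q + 1)) * O.ncard ≤
      ((q + 1) * q ^ 3 * (q ^ 2 + q + 1)) * (a * (q ^ 2 + q)) := by
    calc ((q + 1) * q ^ 3 * (q ^ 2 + q + 1)) * O.ncard
        = (q ^ 2 + q + 1) * ((q + 1) * q ^ 3 * O.ncard) := by ring
      _ ≤ (q ^ 2 + q + 1) * (2 * (q ^ 2 + q) * SH.ncard) :=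
          Nat.mul_le_mul_left _ hstep
      _ = (q ^ 2 + q) * (2 * (q ^ 2 + q + 1) * SH.ncard) := by ring
      _ = (q ^ 2 + q) * (q ^ 3 * Nat.card L) := by rw [← step3]
      _ = (q ^ 2 + q) * (q ^ 3 * ((q + 1) * (q ^ 2 + q + 1) * a)) := by rw [hNLa]
      _ = ((q + 1) * q ^ 3 * (q ^ 2 + q + 1)) * (a * (q ^ 2 + q)) := by ring
  have hpos : 0 < (q + 1) * q ^ 3 * (q ^ 2 + q + 1) := by positivity
  exact Nat.le_of_mul_le_mul_left key hpos

end Main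

end PartialOvoidAux

/-- Bound on partial distance-2 ovoids avoiding full intersection with subhexagons:
if no subhexagon of order `(q, 1)` contains `q² + q + 1` points of a partial distance-2
ovoid `O`, then `|O| ≤ (q² − q + 1)(q² + q)`. -/
theorem partial_ovoid_bound_of_no_full_subhexagon {P L : Type*} [Fintype P] [Fintype L]
    {I : P → L → Prop} {q : ℕ} (hq : 2 ≤ q) (hhex : IsGenPolygon I 6 q q)
    (hunique : ∀ l₁ l₂ : L,
      (incidenceGraph I).dist (Sum.inr l₁) (Sum.inr l₂) = 6 →
      ∃! x : Set P × Set L, IsSubhexagon I q 1 x.1 x.2 ∧ l₁ ∈ x.2 ∧ l₂ ∈ x.2)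
    (O : Set P)
    (hO : ∀ l : L, ∀ x ∈ O, ∀ y ∈ O, I x l → I y l → x = y)
    (hmeet : ∀ P' : Set P, ∀ L' : Set L, IsSubhexagon I q 1 P' L' →
      (O ∩ P').ncard ≠ q ^ 2 + q + 1) :
    O.ncard ≤ (q ^ 2 - q + 1) * (q ^ 2 + q) := by
  exact PartialOvoidAux.main_bound hq hhex hunique O hO hmeet
end

section
/- There exists a partial distance-2 ovoid of size 19 in the dual split Cayley hexagon H(2)^D; that is, there is a set O of 19 points of H(2)^D such that no line of H(2)^D is incident with two distinct elements of O. -/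
open SimpleGraph
section DualSplitCayley

variable (F : Type*) [Field F]

/-- The quadratic form `Q(x) = x₀x₄ + x₁x₅ + x₂x₆ − x₃²` on `F^7`. -/
def hexQF (x : Fin 7 → F) : F := x 0 * x 4 + x 1 * x 5 + x 2 * x 6 - x 3 ^ 2

/-- Grassmann coordinate `p_{ij} = x_i y_j − x_j y_i`. -/
def grassCoord (x y : Fin 7 → F) (i j : Fin 7) : F := x i * y j - x j * y i

/-- Lines of the dual split Cayley hexagon `H(q)^D`: 1-dimensional subspaces of `F^7`
on which `Q` vanishes. -/
def IsHexLine (U : Submodule F (Fin 7 → F)) : Prop :=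
  Module.finrank F U = 1 ∧ ∀ x ∈ U, hexQF F x = 0

/-- Points of the dual split Cayley hexagon `H(q)^D`: 2-dimensional subspaces of `F^7`
on which `Q` vanishes and whose Grassmann coordinates satisfy the six linear conditions. -/
def IsHexPoint (W : Submodule F (Fin 7 → F)) : Prop :=
  Module.finrank F W = 2 ∧ (∀ x ∈ W, hexQF F x = 0) ∧
  ∀ x ∈ W, ∀ y ∈ W,
    grassCoord F x y 1 2 = grassCoord F x y 3 4 ∧
    grassCoord F x y 5 4 = grassCoord F x y 3 2 ∧
    grassCoord F x y 2 0 = grassCoord F x y 3 5 ∧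
    grassCoord F x y 6 5 = grassCoord F x y 3 0 ∧
    grassCoord F x y 0 1 = grassCoord F x y 3 6 ∧
    grassCoord F x y 4 6 = grassCoord F x y 3 1

end DualSplitCayley

def ovX : Fin 19 → Fin 7 → ZMod 2 := ![![0, 0, 1, 1, 0, 0, 1],
  ![0, 0, 0, 0, 0, 1, 0],
  ![0, 0, 0, 0, 0, 0, 1],
  ![0, 0, 0, 0, 1, 1, 0],
  ![0, 1, 1, 1, 0, 1, 0],
  ![0, 1, 0, 1, 1, 1, 1],
  ![0, 0, 1, 1, 1, 1, 1],
  ![0, 0, 1, 0, 1, 0, 0],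
  ![0, 0, 0, 0, 1, 0, 0],
  ![0, 0, 1, 0, 1, 1, 0],
  ![0, 0, 0, 0, 1, 1, 1],
  ![0, 1, 1, 0, 0, 1, 1],
  ![0, 0, 1, 1, 1, 0, 1],
  ![0, 0, 0, 0, 1, 0, 1],
  ![0, 0, 0, 0, 0, 1, 1],
  ![0, 1, 1, 0, 1, 1, 1],
  ![0, 1, 0, 1, 0, 1, 1],
  ![0, 1, 0, 1, 1, 1, 0],
  ![0, 0, 1, 1, 0, 1, 1]]

def ovY : Fin 19 → Fin 7 → ZMod 2 := ![![0, 1, 0, 0, 1, 0, 0],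
  ![0, 0, 1, 0, 0, 0, 0],
  ![0, 1, 0, 0, 0, 0, 0],
  ![1, 1, 1, 0, 0, 0, 0],
  ![1, 0, 1, 0, 1, 1, 1],
  ![1, 0, 0, 1, 1, 1, 0],
  ![1, 1, 0, 0, 1, 1, 0],
  ![0, 1, 0, 1, 0, 1, 0],
  ![0, 1, 1, 0, 0, 0, 0],
  ![1, 1, 0, 1, 1, 0, 0],
  ![1, 1, 0, 0, 0, 0, 0],
  ![1, 0, 0, 1, 1, 0, 0],
  ![1, 0, 0, 1, 1, 1, 1],
  ![1, 0, 1, 0, 0, 0, 0],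
  ![1, 0, 0, 0, 0, 0, 0],
  ![1, 0, 1, 1, 1, 0, 0],
  ![1, 0, 0, 0, 0, 0, 1],
  ![1, 0, 1, 1, 0, 1, 1],
  ![1, 0, 0, 0, 0, 1, 0]]


lemma zmod2_cases (a : ZMod 2) : a = 0 ∨ a = 1 := by revert a; decide

lemma mem_span_pair_f2 {x y v : Fin 7 → ZMod 2} :
    v ∈ Submodule.span (ZMod 2) {x, y} ↔ v = 0 ∨ v = x ∨ v = y ∨ v = x + y := by
  rw [Submodule.mem_span_pair]
  constructor
  · rintro ⟨a, b, rfl⟩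
    rcases zmod2_cases a with rfl | rfl <;> rcases zmod2_cases b with rfl | rfl <;>
      simp [add_comm]
  · rintro (rfl | rfl | rfl | rfl)
    · exact ⟨0, 0, by simp⟩
    · exact ⟨1, 0, by simp⟩
    · exact ⟨0, 1, by simp⟩
    · exact ⟨1, 1, by simp⟩

lemma grass_smul (x y : Fin 7 → ZMod 2) (a b c d : ZMod 2) (i j : Fin 7) :
    grassCoord (ZMod 2) (a • x + b • y) (c • x + d • y) i j
      = (a * d - b * c) * grassCoord (ZMod 2) x y i j := by
  simp only [grassCoord, Pi.add_apply, Pi.smul_apply, smul_eq_mul]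
  ring

lemma isHexPoint_of (x y : Fin 7 → ZMod 2)
    (hx : x ≠ 0) (hy : y ≠ 0) (hxy : x ≠ y)
    (q1 : hexQF (ZMod 2) x = 0) (q2 : hexQF (ZMod 2) y = 0)
    (q3 : hexQF (ZMod 2) (x + y) = 0)
    (g : grassCoord (ZMod 2) x y 1 2 = grassCoord (ZMod 2) x y 3 4 ∧
      grassCoord (ZMod 2) x y 5 4 = grassCoord (ZMod 2) x y 3 2 ∧
      grassCoord (ZMod 2) x y 2 0 = grassCoord (ZMod 2) x y 3 5 ∧
      grassCoord (ZMod 2) x y 6 5 = grassCoord (ZMod 2) x y 3 0 ∧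
      grassCoord (ZMod 2) x y 0 1 = grassCoord (ZMod 2) x y 3 6 ∧
      grassCoord (ZMod 2) x y 4 6 = grassCoord (ZMod 2) x y 3 1) :
    IsHexPoint (ZMod 2) (Submodule.span (ZMod 2) {x, y}) := by
  have hq0 : hexQF (ZMod 2) (0 : Fin 7 → ZMod 2) = 0 := by
    simp [hexQF]
  refine ⟨?_, ?_, ?_⟩
  · have hi : LinearIndependent (ZMod 2) (fun v => (v : Fin 7 → ZMod 2) : ({x, y} : Set (Fin 7 → ZMod 2)) → (Fin 7 → ZMod 2)) := by
      refine linearIndepOn_id_pair hx fun a ha => ?_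
      rcases zmod2_cases a with rfl | rfl
      · rw [zero_smul] at ha; exact hy ha.symm
      · rw [one_smul] at ha; exact hxy ha
    have := finrank_span_set_eq_card (s := ({x, y} : Set (Fin 7 → ZMod 2))) hi
    rw [show ({x, y} : Set (Fin 7 → ZMod 2)).toFinset = {x, y} from by simp,
      Finset.card_pair hxy] at this
    exact this
  · intro v hv
    rcases mem_span_pair_f2.1 hv with rfl | rfl | rfl | rfl <;> assumption
  · intro u hu v hv
    rcases Submodule.mem_span_pair.1 hu with ⟨a, b, rfl⟩
    rcases Submodule.mem_span_pair.1 hv with ⟨c, d, rfl⟩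
    simp only [grass_smul]
    exact ⟨by rw [g.1], by rw [g.2.1], by rw [g.2.2.1], by rw [g.2.2.2.1],
      by rw [g.2.2.2.2.1], by rw [g.2.2.2.2.2]⟩

def ovW (i : Fin 19) : Submodule (ZMod 2) (Fin 7 → ZMod 2) :=
  Submodule.span (ZMod 2) {ovX i, ovY i}

lemma data_nondeg : ∀ i : Fin 19, ovX i ≠ 0 ∧ ovY i ≠ 0 ∧ ovX i + ovY i ≠ 0 ∧ ovX i ≠ ovY i := by decide

lemma data_q : ∀ i : Fin 19, hexQF (ZMod 2) (ovX i) = 0 ∧ hexQF (ZMod 2) (ovY i) = 0 ∧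
    hexQF (ZMod 2) (ovX i + ovY i) = 0 := by decide

lemma data_g : ∀ i : Fin 19,
    grassCoord (ZMod 2) (ovX i) (ovY i) 1 2 = grassCoord (ZMod 2) (ovX i) (ovY i) 3 4 ∧
    grassCoord (ZMod 2) (ovX i) (ovY i) 5 4 = grassCoord (ZMod 2) (ovX i) (ovY i) 3 2 ∧
    grassCoord (ZMod 2) (ovX i) (ovY i) 2 0 = grassCoord (ZMod 2) (ovX i) (ovY i) 3 5 ∧
    grassCoord (ZMod 2) (ovX i) (ovY i) 6 5 = grassCoord (ZMod 2) (ovX i) (ovY i) 3 0 ∧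
    grassCoord (ZMod 2) (ovX i) (ovY i) 0 1 = grassCoord (ZMod 2) (ovX i) (ovY i) 3 6 ∧
    grassCoord (ZMod 2) (ovX i) (ovY i) 4 6 = grassCoord (ZMod 2) (ovX i) (ovY i) 3 1 := by decide

lemma data_disj : ∀ i j : Fin 19, i ≠ j →
    ovX i ≠ ovX j ∧ ovX i ≠ ovY j ∧ ovX i ≠ ovX j + ovY j ∧
    ovY i ≠ ovX j ∧ ovY i ≠ ovY j ∧ ovY i ≠ ovX j + ovY j ∧
    ovX i + ovY i ≠ ovX j ∧ ovX i + ovY i ≠ ovY j ∧ ovX i + ovY i ≠ ovX j + ovY j := by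
  decide

lemma ovW_point (i : Fin 19) : IsHexPoint (ZMod 2) (ovW i) :=
  isHexPoint_of _ _ (data_nondeg i).1 (data_nondeg i).2.1 (data_nondeg i).2.2.2
    (data_q i).1 (data_q i).2.1 (data_q i).2.2 (data_g i)

lemma ovW_disjoint {i j : Fin 19} (hij : i ≠ j) {v : Fin 7 → ZMod 2}
    (hi : v ∈ ovW i) (hj : v ∈ ovW j) : v = 0 := by
  rcases mem_span_pair_f2.1 hi with rfl | rfl | rfl | rfl
  · rfl
  all_goals {
    obtain ⟨d1, d2, d3, d4, d5, d6, d7, d8, d9⟩ := data_disj i j hij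
    obtain ⟨n1, n2, n3, n4⟩ := data_nondeg i
    rcases mem_span_pair_f2.1 hj with h | h | h | h <;> exact absurd h (by assumption) }


/-- There exists a partial distance-2 ovoid of size `19` in the dual split Cayley
hexagon `H(2)^D`. -/
theorem exists_partial_ovoid_H2D_of_size_19 :
    ∃ O : Set {W : Submodule (ZMod 2) (Fin 7 → ZMod 2) // IsHexPoint (ZMod 2) W},
      O.ncard = 19 ∧
      ∀ l : {U : Submodule (ZMod 2) (Fin 7 → ZMod 2) // IsHexLine (ZMod 2) U},
        ∀ p ∈ O, ∀ p' ∈ O,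
          (l : Submodule (ZMod 2) (Fin 7 → ZMod 2)) ≤ (p : Submodule (ZMod 2) (Fin 7 → ZMod 2)) →
          (l : Submodule (ZMod 2) (Fin 7 → ZMod 2)) ≤ (p' : Submodule (ZMod 2) (Fin 7 → ZMod 2)) →
          p = p' := by
  classical
  refine ⟨Set.range (fun i : Fin 19 => ⟨ovW i, ovW_point i⟩), ?_, ?_⟩
  · have hinj : Function.Injective
        (fun i : Fin 19 => (⟨ovW i, ovW_point i⟩ :
          {W : Submodule (ZMod 2) (Fin 7 → ZMod 2) // IsHexPoint (ZMod 2) W})) := by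
      intro i j hijeq
      by_contra hij
      have hx : ovX i ∈ ovW i :=
        Submodule.subset_span (by simp)
      have hx' : ovX i ∈ ovW j := by
        have : ovW i = ovW j := congrArg Subtype.val hijeq
        rwa [this] at hx
      exact (data_nondeg i).1 (ovW_disjoint hij hx hx')
    rw [← Set.image_univ, Set.ncard_image_of_injective _ hinj, Set.ncard_univ]
    exact Nat.card_eq_fintype_card.trans (by simp)
  · rintro l p ⟨i, rfl⟩ p' ⟨j, rfl⟩ hli hlj
    by_contra hne
    have hij : i ≠ j := fun h => hne (by rw [h])
    obtain ⟨v, hvl, hv0⟩ : ∃ v ∈ l.1, v ≠ 0 := by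
      have h1 : Module.finrank (ZMod 2) l.1 > 0 := by rw [l.2.1]; norm_num
      obtain ⟨⟨v, hv⟩, hvne⟩ := Module.finrank_pos_iff_exists_ne_zero.1 h1
      exact ⟨v, hv, fun h => hvne (Subtype.ext h)⟩
    exact hv0 (ovW_disjoint hij (hli hvl) (hlj hvl))
end
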